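/- arXiv:2201.06397 — 6 statements merged into one kernel-verified Lean document; each statement's English description precedes it below -/
import Mathlib

section
/- Let σ ∈ (0,1]. If u : V → ℝ is a nonnegative solution of Δu + u^σ ≤ 0 on V, then u ≡ 0. -/
open Real

/-- The measure of a vertex: `μ(x) = Σ_y μ_{xy}`. -/
noncomputable def vmu {V : Type*} (μ : V → V → ℝ) (x : V) : ℝ := ∑ᶠ y, μ x y

/-- The weighted graph Laplacian `Δu(x) = (1/μ(x)) Σ_y μ_{xy}(u(y) - u(x))`. -/
noncomputable def lap {V : Type*} (μ : V → V → ℝ) (u : V → ℝ) (x : V) : ℝ :=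
  (∑ᶠ y, μ x y * (u y - u x)) / vmu μ x

/-- The simple graph underlying a weighted graph: `x ~ y` iff `μ_{xy} > 0`
(stated symmetrically so that no hypotheses on `μ` are needed). -/
def graphOf {V : Type*} (μ : V → V → ℝ) : SimpleGraph V where
  Adj x y := x ≠ y ∧ 0 < μ x y ∧ 0 < μ y x
  symm := by
    constructor
    intro x y h
    exact ⟨h.1.symm, h.2.2, h.2.1⟩
  loopless := by
    constructor
    intro x h
    exact h.1 rfl

/-- The measure of the closed ball `B(o,n)`: `μ(B(o,n)) = Σ_{d(o,x) ≤ n} μ(x)`. -/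
noncomputable def ballMu {V : Type*} (μ : V → V → ℝ) (o : V) (n : ℕ) : ℝ :=
  ∑ᶠ x ∈ {x : V | (graphOf μ).dist o x ≤ n}, vmu μ x

/-- For σ ∈ (0,1], any nonnegative solution of Δu + u^σ ≤ 0 on a
weighted graph is identically zero. -/
theorem stmt_0 {V : Type*} [Infinite V] (μ : V → V → ℝ)
    (hsymm : ∀ x y, μ x y = μ y x)
    (hnonneg : ∀ x y, 0 ≤ μ x y)
    (hloop : ∀ x, μ x x = 0)
    (hlocfin : ∀ x, (Function.support fun y => μ x y).Finite)
    (hconn : (graphOf μ).Connected)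
    (σ : ℝ) (hσ0 : 0 < σ) (hσ1 : σ ≤ 1)
    (u : V → ℝ) (hu : ∀ x, 0 ≤ u x)
    (hsol : ∀ x, lap μ u x + u x ^ σ ≤ 0) :
    ∀ x, u x = 0 := by
  -- Convert finsum statements to finite sums and derive the key facts.
  classical
  have hvmu : ∀ x, 0 < vmu μ x := by
    intro x
    obtain ⟨y0, hy0⟩ : ∃ y, 0 < μ x y := by
      obtain ⟨y, hy⟩ := exists_ne x
      obtain ⟨w⟩ := hconn x y
      cases w with
      | nil => exact absurd rfl hy
      | cons h p => exact ⟨_, h.2.1⟩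
    rw [vmu, finsum_eq_sum _ (hlocfin x)]
    refine Finset.sum_pos' (fun y _ => hnonneg x y) ⟨y0, ?_, hy0⟩
    simpa [Set.Finite.mem_toFinset, Function.mem_support] using hy0.ne'
  -- key descent step: from any vertex there is a neighbor where u drops by u x ^ σ
  have key : ∀ x, ∃ y, 0 < μ x y ∧ u y ≤ u x - u x ^ σ := by
    intro x
    by_contra hcon
    push_neg at hcon
    set s := (hlocfin x).toFinset with hs
    have hl : (∑ᶠ y, μ x y * (u y - u x)) = ∑ y ∈ s, μ x y * (u y - u x) := by
      refine finsum_eq_finset_sum_of_support_subset _ ?_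
      intro y hy
      have : μ x y ≠ 0 := by
        intro h0
        simp [h0] at hy
      simpa [hs, Set.Finite.mem_toFinset, Function.mem_support] using this
    have hv : vmu μ x = ∑ y ∈ s, μ x y := finsum_eq_sum _ (hlocfin x)
    have hsolx := hsol x
    rw [lap, hl] at hsolx
    have hS : (∑ y ∈ s, μ x y * (u y - u x)) ≤ -(u x ^ σ) * vmu μ x := by
      have h1 : (∑ y ∈ s, μ x y * (u y - u x)) / vmu μ x ≤ -(u x ^ σ) := by
        linarith
      calc (∑ y ∈ s, μ x y * (u y - u x))
          = ((∑ y ∈ s, μ x y * (u y - u x)) / vmu μ x) * vmu μ x := by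
            rw [div_mul_cancel₀ _ (hvmu x).ne']
        _ ≤ -(u x ^ σ) * vmu μ x := by
            exact mul_le_mul_of_nonneg_right h1 (hvmu x).le
    have hSsum : (∑ y ∈ s, μ x y * (u y - u x + u x ^ σ)) ≤ 0 := by
      have : (∑ y ∈ s, μ x y * (u y - u x + u x ^ σ))
          = (∑ y ∈ s, μ x y * (u y - u x)) + (∑ y ∈ s, μ x y) * (u x ^ σ) := by
        rw [Finset.sum_mul, ← Finset.sum_add_distrib]
        congr 1; ext y; ring
      rw [this, ← hv]
      nlinarith [hvmu x]
    have hpos : 0 < ∑ y ∈ s, μ x y * (u y - u x + u x ^ σ) := by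
      obtain ⟨y0, hy0⟩ : ∃ y, 0 < μ x y := by
        obtain ⟨y, hy⟩ := exists_ne x
        obtain ⟨w⟩ := hconn x y
        cases w with
        | nil => exact absurd rfl hy
        | cons h p => exact ⟨_, h.2.1⟩
      refine Finset.sum_pos' ?_ ⟨y0, ?_, ?_⟩
      · intro y _
        rcases lt_or_eq_of_le (hnonneg x y) with h | h
        · have h2 := hcon y h
          have : 0 < u y - u x + u x ^ σ := by linarith
          positivity
        · simp [← h]
      · simpa [hs, Set.Finite.mem_toFinset, Function.mem_support] using hy0.ne'
      · have h2 := hcon y0 hy0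
        have : 0 < u y0 - u x + u x ^ σ := by linarith
        positivity
    linarith
  -- existence of a zero of u
  have hzero : ∃ z, u z = 0 := by
    have H : ∀ n : ℕ, ∀ x, u x ≤ n → ∃ z, u z = 0 := by
      intro n
      induction n with
      | zero =>
        intro x hx
        exact ⟨x, le_antisymm (by exact_mod_cast hx) (hu x)⟩
      | succ n ih =>
        intro x hx
        rcases eq_or_lt_of_le (hu x) with h0 | h0
        · exact ⟨x, h0.symm⟩
        obtain ⟨y, hμy, hy⟩ := key x
        by_cases h1 : u x ≤ 1
        · have hle : u x ≤ u x ^ σ := by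
            have := Real.rpow_le_rpow_of_exponent_ge h0 h1 hσ1
            simpa using this
          exact ⟨y, le_antisymm (by linarith) (hu y)⟩
        · push_neg at h1
          have hge : (1 : ℝ) ≤ u x ^ σ := by
            have := Real.rpow_le_rpow_of_exponent_le h1.le hσ0.le
            simpa using this
          refine ih y ?_
          push_cast at hx ⊢
          linarith
    exact H ⌈u (Classical.arbitrary V)⌉₊ _ (Nat.le_ceil _)
  -- zeros propagate to neighbors
  have prop : ∀ z, u z = 0 → ∀ y, 0 < μ z y → u y = 0 := by
    intro z hz y hμy
    set s := (hlocfin z).toFinset with hs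
    have hl : (∑ᶠ w, μ z w * (u w - u z)) = ∑ w ∈ s, μ z w * u w := by
      rw [hz]
      simp only [sub_zero]
      refine finsum_eq_finset_sum_of_support_subset _ ?_
      intro w hw
      have : μ z w ≠ 0 := by
        intro h0
        simp [h0] at hw
      simpa [hs, Set.Finite.mem_toFinset, Function.mem_support] using this
    have hsolz := hsol z
    rw [lap, hl, hz, Real.zero_rpow hσ0.ne', add_zero] at hsolz
    have hS : (∑ w ∈ s, μ z w * u w) ≤ 0 := by
      by_contra hS
      push_neg at hS
      have := div_pos hS (hvmu z)
      linarith
    have hall : ∀ w ∈ s, μ z w * u w = 0 := by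
      have hnn : ∀ w ∈ s, 0 ≤ μ z w * u w := fun w _ => mul_nonneg (hnonneg z w) (hu w)
      have := le_antisymm hS (Finset.sum_nonneg hnn)
      exact (Finset.sum_eq_zero_iff_of_nonneg hnn).mp this
    have hymem : y ∈ s := by
      simpa [hs, Set.Finite.mem_toFinset, Function.mem_support] using hμy.ne'
    have := hall y hymem
    rcases mul_eq_zero.mp this with h | h
    · exact absurd h hμy.ne'
    · exact h
  -- propagate along walks
  have step : ∀ {a b : V} (_ : (graphOf μ).Walk a b), u a = 0 → u b = 0 := by
    intro a b w
    induction w with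
    | nil => exact id
    | cons h p ih => exact fun ha => ih (prop _ ha _ h.2.1)
  obtain ⟨z, hz⟩ := hzero
  intro x
  obtain ⟨w⟩ := hconn z x
  exact step w hz
end

section
/- Let σ > 1 and suppose the weighted graph (V, μ) satisfies condition (p0) with constant p0 > 1. If u : V → ℝ is a nonnegative solution of Δu + u^σ ≤ 0 on V, then either u ≡ 0, or 0 < u(x) < 1 for all x ∈ V and 1/p0 ≤ u(x)/u(y) ≤ p0 for every pair of adjacent vertices x ~ y. -/
open Real

/-- For σ > 1, under condition (p0), a nonnegative solution of
Δu + u^σ ≤ 0 is either identically zero, or satisfies 0 < u < 1 on V and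
1/p0 ≤ u(x)/u(y) ≤ p0 for all adjacent x ~ y. -/
theorem stmt_3 {V : Type*} [Infinite V] (μ : V → V → ℝ)
    (hsymm : ∀ x y, μ x y = μ y x)
    (hnonneg : ∀ x y, 0 ≤ μ x y)
    (hloop : ∀ x, μ x x = 0)
    (hlocfin : ∀ x, (Function.support fun y => μ x y).Finite)
    (hconn : (graphOf μ).Connected)
    (σ : ℝ) (hσ : 1 < σ)
    (p0 : ℝ) (hp0 : 1 < p0)
    (hP : ∀ x y, 0 < μ x y → 1 / p0 ≤ μ x y / vmu μ x)
    (u : V → ℝ) (hu : ∀ x, 0 ≤ u x)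
    (hsol : ∀ x, lap μ u x + u x ^ σ ≤ 0) :
    (∀ x, u x = 0) ∨
      ((∀ x, 0 < u x ∧ u x < 1) ∧
        ∀ x y, 0 < μ x y → 1 / p0 ≤ u x / u y ∧ u x / u y ≤ p0) := by
  classical
  set S : V → Finset V := fun x => (hlocfin x).toFinset with hS
  have hmem : ∀ x y, y ∈ S x ↔ μ x y ≠ 0 := by
    intro x y
    simp [hS, Set.Finite.mem_toFinset, Function.mem_support]
  -- every vertex has a neighbor
  have hne : ∀ x : V, ∃ z, 0 < μ x z := by
    intro x
    obtain ⟨y, hy⟩ := exists_ne x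
    obtain ⟨w⟩ := hconn.preconnected x y
    cases w with
    | nil => exact absurd rfl hy
    | cons h p => exact ⟨_, h.2.1⟩
  have hvmu_eq : ∀ x, vmu μ x = ∑ y ∈ S x, μ x y := fun x =>
    finsum_eq_sum _ (hlocfin x)
  have hvpos : ∀ x, 0 < vmu μ x := by
    intro x
    obtain ⟨z, hz⟩ := hne x
    rw [hvmu_eq]
    have hzmem : z ∈ S x := (hmem x z).mpr (ne_of_gt hz)
    calc (0:ℝ) < μ x z := hz
    _ ≤ ∑ y ∈ S x, μ x y := Finset.single_le_sum (fun i _ => hnonneg x i) hzmem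
  -- key inequality
  have key : ∀ x, (∑ y ∈ S x, μ x y * u y) ≤ vmu μ x * (u x - u x ^ σ) := by
    intro x
    have hnum : (∑ᶠ y, μ x y * (u y - u x)) = ∑ y ∈ S x, μ x y * (u y - u x) := by
      apply finsum_eq_finset_sum_of_support_subset
      intro y hy
      simp only [Function.mem_support] at hy
      have : μ x y ≠ 0 := by
        intro h; apply hy; rw [h]; ring
      simpa [hmem] using this
    have h1 := hsol x
    rw [lap, hnum] at h1
    have h2 : (∑ y ∈ S x, μ x y * (u y - u x)) ≤ (-(u x ^ σ)) * vmu μ x := by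
      rw [← div_le_iff₀ (hvpos x)]
      linarith
    have h3 : (∑ y ∈ S x, μ x y * (u y - u x))
        = (∑ y ∈ S x, μ x y * u y) - (∑ y ∈ S x, μ x y) * u x := by
      rw [Finset.sum_mul, ← Finset.sum_sub_distrib]
      apply Finset.sum_congr rfl
      intro y _
      ring
    rw [h3, ← hvmu_eq x] at h2
    nlinarith [hvpos x]
  -- single term bound
  have term_le : ∀ x y, 0 < μ x y → μ x y * u y ≤ ∑ z ∈ S x, μ x z * u z := by
    intro x y hxy
    exact Finset.single_le_sum (fun i _ => mul_nonneg (hnonneg x i) (hu i))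
      ((hmem x y).mpr (ne_of_gt hxy))
  by_cases h0 : ∃ x, u x = 0
  · left
    obtain ⟨x0, hx0⟩ := h0
    have step : ∀ x y, u x = 0 → (graphOf μ).Adj x y → u y = 0 := by
      intro x y hx hadj
      have hk := key x
      rw [hx, Real.zero_rpow (by positivity)] at hk
      have hT0 : (∑ z ∈ S x, μ x z * u z) ≤ 0 := by simpa using hk
      have ht := term_le x y hadj.2.1
      have h1 : μ x y * u y ≤ 0 := le_trans ht hT0
      have h2 : 0 ≤ μ x y * u y := mul_nonneg (hnonneg x y) (hu y)
      have h3 : μ x y * u y = 0 := le_antisymm h1 h2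
      rcases mul_eq_zero.mp h3 with h | h
      · exact absurd h (ne_of_gt hadj.2.1)
      · exact h
    have prop : ∀ {a b : V}, (graphOf μ).Walk a b → u a = 0 → u b = 0 := by
      intro a b w
      induction w with
      | nil => exact id
      | cons h p ih => intro ha; exact ih (step _ _ ha h)
    intro x
    obtain ⟨w⟩ := hconn.preconnected x0 x
    exact prop w hx0
  · push_neg at h0
    have hpos : ∀ x, 0 < u x := fun x => (hu x).lt_of_ne (Ne.symm (h0 x))
    right
    have hlt1 : ∀ x, u x < 1 := by
      intro x
      obtain ⟨z, hz⟩ := hne x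
      have hT : 0 < ∑ z' ∈ S x, μ x z' * u z' :=
        lt_of_lt_of_le (mul_pos hz (hpos z)) (term_le x z hz)
      have hk := key x
      have hv := hvpos x
      have h1 : u x ^ σ < u x := by nlinarith
      by_contra hge
      push_neg at hge
      have h2 : u x ^ (1:ℝ) ≤ u x ^ σ :=
        Real.rpow_le_rpow_of_exponent_le hge (le_of_lt hσ)
      rw [Real.rpow_one] at h2
      linarith
    have main : ∀ x y, 0 < μ x y → u y ≤ p0 * u x := by
      intro x y hxy
      have h1 := le_trans (term_le x y hxy) (key x)
      have hrpow : 0 ≤ u x ^ σ := Real.rpow_nonneg (hu x) σ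
      have h2 : μ x y * u y ≤ vmu μ x * u x := by nlinarith [hvpos x]
      have h3 : vmu μ x ≤ p0 * μ x y := by
        have hq := hP x y hxy
        rw [div_le_div_iff₀ (by linarith : (0:ℝ) < p0) (hvpos x)] at hq
        nlinarith
      have h4 : μ x y * u y ≤ p0 * μ x y * u x := by nlinarith [hpos x]
      nlinarith [hpos x]
    refine ⟨fun x => ⟨hpos x, hlt1 x⟩, ?_⟩
    intro x y hxy
    have hyx : 0 < μ y x := by rw [← hsymm x y]; exact hxy
    have h1 := main x y hxy
    have h2 := main y x hyx
    constructor
    · rw [div_le_div_iff₀ (by linarith : (0:ℝ) < p0) (hpos y)]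
      linarith
    · rw [div_le_iff₀ (hpos y)]
      linarith
end

section
/- Let σ ∈ (0,1). If u : V → ℝ is a solution of Δu + u^σ ≤ 0 on V with u(x) > 0 for all x ∈ V, then u(x) ≥ 1 for all x ∈ V. -/
open Real

/-- For σ ∈ (0,1), a positive solution of Δu + u^σ ≤ 0 satisfies
u ≥ 1 everywhere. -/
theorem stmt_4 {V : Type*} [Infinite V] (μ : V → V → ℝ)
    (hsymm : ∀ x y, μ x y = μ y x)
    (hnonneg : ∀ x y, 0 ≤ μ x y)
    (hloop : ∀ x, μ x x = 0)
    (hlocfin : ∀ x, (Function.support fun y => μ x y).Finite)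
    (hconn : (graphOf μ).Connected)
    (σ : ℝ) (hσ0 : 0 < σ) (hσ1 : σ < 1)
    (u : V → ℝ) (hu : ∀ x, 0 < u x)
    (hsol : ∀ x, lap μ u x + u x ^ σ ≤ 0) :
    ∀ x, 1 ≤ u x := by
  intro x
  by_contra hlt
  push_neg at hlt
  have hux := hu x
  set F := (hlocfin x).toFinset with hF
  have hN : (∑ᶠ y, μ x y * (u y - u x)) = ∑ y ∈ F, μ x y * (u y - u x) := by
    apply finsum_eq_finset_sum_of_support_subset
    intro y hy
    simp only [Function.mem_support] at hy
    rw [hF, Set.Finite.coe_toFinset]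
    simp only [Function.mem_support]
    intro h0
    exact hy (by simp [h0])
  have hS : vmu μ x = ∑ y ∈ F, μ x y := by
    apply finsum_eq_finset_sum_of_support_subset
    intro y hy
    simpa [hF] using hy
  have hSnn : 0 ≤ ∑ y ∈ F, μ x y := Finset.sum_nonneg fun y _ => hnonneg x y
  have hNge : -((∑ y ∈ F, μ x y) * u x) ≤ ∑ y ∈ F, μ x y * (u y - u x) := by
    have h1 : ∑ y ∈ F, μ x y * (-u x) ≤ ∑ y ∈ F, μ x y * (u y - u x) := by
      apply Finset.sum_le_sum
      intro y _
      have := (hu y).le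
      nlinarith [hnonneg x y]
    have h2 : ∑ y ∈ F, μ x y * (-u x) = -((∑ y ∈ F, μ x y) * u x) := by
      rw [← Finset.sum_mul]; ring
    linarith
  have hlap : -u x ≤ lap μ u x := by
    unfold lap
    rw [hN, hS]
    rcases eq_or_lt_of_le hSnn with h0 | hpos
    · rw [← h0, div_zero]
      linarith
    · rw [le_div_iff₀ hpos]
      nlinarith
  have hle : u x ^ σ ≤ u x := by
    have := hsol x
    linarith
  have : u x < u x ^ σ := by
    have := Real.rpow_lt_rpow_of_exponent_gt hux hlt hσ1
    simpa using this
  linarith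
end

section
/- Let σ ∈ (0,1). If u : V → ℝ is a solution of Δu + u^σ ≤ 0 on V with u(x) > 0 for all x ∈ V, then for every x0 ∈ V there exists a sequence of vertices (x_i)_{i≥0} starting at x0 with x_{i+1} adjacent to x_i for all i, such that u(x_n) ≤ u(x_0) · (1 − u(x_0)^{σ−1})^n for every n ≥ 0. -/
open Real

/-- For σ ∈ (0,1), if u > 0 solves Δu + u^σ ≤ 0, then from any
vertex x0 there is a path (x_i) with x_{i+1} ~ x_i along which
u(x_n) ≤ u(x_0) (1 - u(x_0)^{σ-1})^n for all n. -/
theorem stmt_5 {V : Type*} [Infinite V] (μ : V → V → ℝ)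
    (hsymm : ∀ x y, μ x y = μ y x)
    (hnonneg : ∀ x y, 0 ≤ μ x y)
    (hloop : ∀ x, μ x x = 0)
    (hlocfin : ∀ x, (Function.support fun y => μ x y).Finite)
    (hconn : (graphOf μ).Connected)
    (σ : ℝ) (hσ0 : 0 < σ) (hσ1 : σ < 1)
    (u : V → ℝ) (hu : ∀ x, 0 < u x)
    (hsol : ∀ x, lap μ u x + u x ^ σ ≤ 0) :
    ∀ x0 : V, ∃ xs : ℕ → V, xs 0 = x0 ∧ (∀ i : ℕ, 0 < μ (xs i) (xs (i + 1))) ∧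
      ∀ n : ℕ, u (xs n) ≤ u x0 * (1 - u x0 ^ (σ - 1)) ^ n := by
  intro x0
  -- Key step: from every vertex there is a neighbor with a definite decrease.
  have key : ∀ x : V, ∃ y, 0 < μ x y ∧ u y ≤ u x - u x ^ σ := by
    intro x
    -- x has a neighbor
    obtain ⟨z, hz⟩ := exists_ne x
    obtain ⟨w⟩ := hconn.preconnected x z
    have hnbr : ∃ y0, 0 < μ x y0 := by
      cases w with
      | nil => exact absurd rfl hz.symm
      | cons h p => exact ⟨_, h.2.1⟩
    obtain ⟨y0, hy0⟩ := hnbr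
    set t : Finset V := (hlocfin x).toFinset with ht
    have hy0t : y0 ∈ t := by
      simp [ht, Function.mem_support]; positivity
    have hsum : vmu μ x = ∑ y ∈ t, μ x y := by
      rw [vmu, finsum_eq_sum _ (hlocfin x)]
    have hmpos : 0 < vmu μ x := by
      rw [hsum]
      exact Finset.sum_pos' (fun y _ => hnonneg x y) ⟨y0, hy0t, hy0⟩
    have hsum2 : (∑ᶠ y, μ x y * (u y - u x)) = ∑ y ∈ t, μ x y * (u y - u x) := by
      apply finsum_eq_sum_of_support_subset
      intro y hy
      simp only [Function.mem_support] at hy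
      have : μ x y ≠ 0 := by
        intro h; rw [h] at hy; simpa using hy
      simp [ht, Function.mem_support, this]
    have hlap := hsol x
    rw [lap] at hlap
    have hS : (∑ᶠ y, μ x y * (u y - u x)) ≤ (-u x ^ σ) * vmu μ x := by
      rw [← div_le_iff₀ hmpos]
      linarith
    by_contra hcon
    push_neg at hcon
    have hlt : ∑ y ∈ t, (-u x ^ σ) * μ x y < ∑ y ∈ t, μ x y * (u y - u x) := by
      apply Finset.sum_lt_sum_of_nonempty ⟨y0, hy0t⟩
      intro y hyt
      have hμy : 0 < μ x y := by
        have : μ x y ≠ 0 := by simpa [ht, Function.mem_support] using hyt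
        exact (hnonneg x y).lt_of_ne (Ne.symm this)
      have := hcon y hμy
      nlinarith
    rw [← Finset.mul_sum, ← hsum] at hlt
    rw [hsum2] at hS
    linarith
  -- the identity u x - u x ^ σ = u x * (1 - u x ^ (σ - 1))
  have hid : ∀ x : V, u x - u x ^ σ = u x * (1 - u x ^ (σ - 1)) := by
    intro x
    have : u x ^ σ = u x * u x ^ (σ - 1) := by
      have h := Real.rpow_add (hu x) 1 (σ - 1)
      rw [Real.rpow_one] at h
      rw [← h]; norm_num
    rw [this]; ring
  -- build the sequence
  let xs : ℕ → V := fun n => Nat.rec x0 (fun _ prev => Classical.choose (key prev)) n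
  have hxs0 : xs 0 = x0 := rfl
  have hstep : ∀ i, 0 < μ (xs i) (xs (i + 1)) ∧
      u (xs (i + 1)) ≤ u (xs i) - u (xs i) ^ σ := fun i =>
    Classical.choose_spec (key (xs i))
  refine ⟨xs, rfl, fun i => (hstep i).1, ?_⟩
  set q : ℝ := 1 - u x0 ^ (σ - 1) with hq
  -- q > 0
  have hq0 : 0 < q := by
    have h1 := (hstep 0).2
    rw [hxs0, hid x0] at h1
    have h2 : 0 < u x0 * (1 - u x0 ^ (σ - 1)) := lt_of_lt_of_le (hu _) h1
    have := hu x0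
    nlinarith
  have hq1 : q ≤ 1 := by
    have : 0 < u x0 ^ (σ - 1) := Real.rpow_pos_of_pos (hu x0) _
    simp only [hq]; linarith
  intro n
  induction n with
  | zero => simp [hxs0]
  | succ n ih =>
    have h1 := (hstep n).2
    rw [hid (xs n)] at h1
    have hfac : 0 < 1 - u (xs n) ^ (σ - 1) := by
      have h2 : 0 < u (xs n) * (1 - u (xs n) ^ (σ - 1)) := lt_of_lt_of_le (hu _) h1
      have := hu (xs n)
      nlinarith
    have hle0 : u (xs n) ≤ u x0 := by
      have hpow : q ^ n ≤ 1 := pow_le_one₀ hq0.le hq1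
      have := hu x0
      nlinarith
    have hmono : u x0 ^ (σ - 1) ≤ u (xs n) ^ (σ - 1) :=
      Real.rpow_le_rpow_of_nonpos (hu (xs n)) hle0 (by linarith)
    have hfq : 1 - u (xs n) ^ (σ - 1) ≤ q := by simp only [hq]; linarith
    calc u (xs (n + 1)) ≤ u (xs n) * (1 - u (xs n) ^ (σ - 1)) := h1
      _ ≤ u (xs n) * q := by
          exact mul_le_mul_of_nonneg_left hfq (hu (xs n)).le
      _ ≤ (u x0 * q ^ n) * q := mul_le_mul_of_nonneg_right ih hq0.le
      _ = u x0 * q ^ (n + 1) := by ring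
end

section
/- Let p > 0 and ε > 0. Then the limit as n → ∞ (over integers n ≥ 2) of n² ln n − n^{2p+2}(ln n)^{p+1} · [ n^{2p+1}(ln n)^{p+ε} / ((n+1)^{2p}(ln(n+1))^{p}) + (n−1)^{2p+1}(ln(n−1))^{p+ε} / ((n−1)^{2p}(ln(n−1))^{p}) ] / [ n^{2p+1}(ln n)^{p+ε} + (n−1)^{2p+1}(ln(n−1))^{p+ε} ] equals p·ε. -/
open Real Filter

section stmt10aux
open Asymptotics

lemma log_b2 {t : ℝ} (ht : |t| ≤ 1/2) :
    |Real.log (1+t) - (t - t^2/2)| ≤ 2* |t|^3 := by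
  have h1 : |(-t : ℝ)| < 1 := by rw [abs_neg]; linarith [abs_nonneg t]
  have key := Real.abs_log_sub_add_sum_range_le h1 2
  simp [Finset.sum_range_succ] at key
  have he : Real.log (1+t) - (t - t^2/2) = -t + t^2/(1+1) + Real.log (1+t) := by ring
  rw [he]
  refine key.trans ?_
  rw [div_le_iff₀ (by linarith)]
  nlinarith [pow_nonneg (abs_nonneg t) 3]

lemma log_b1 {t : ℝ} (ht : |t| ≤ 1/2) :
    |Real.log (1+t) - t| ≤ 2*t^2 := by
  have h := log_b2 ht
  have he : Real.log (1+t) - t = (Real.log (1+t) - (t - t^2/2)) + (-(t^2/2)) := by ring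
  rw [he]
  refine (abs_add_le _ _).trans ?_
  rw [abs_neg]
  have h3 : |t|^3 ≤ (1/2) * t^2 := by
    have : |t|^3 = |t| * t^2 := by rw [← sq_abs]; ring
    rw [this]
    nlinarith [sq_nonneg t]
  have : |t^2/2| = t^2/2 := abs_of_nonneg (by positivity)
  rw [this]
  linarith [sq_nonneg t]

lemma log_abs_le {t : ℝ} (ht : |t| ≤ 1/2) : |Real.log (1+t)| ≤ 2* |t| := by
  have h := log_b1 ht
  calc |Real.log (1+t)| ≤ |Real.log (1+t) - t| + |t| := by
        have := abs_sub_abs_le_abs_sub (Real.log (1+t)) t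
        have h2 := abs_add_le (Real.log (1+t) - t) t
        simpa using h2
    _ ≤ 2*t^2 + |t| := by linarith
    _ ≤ 2* |t| := by nlinarith [sq_abs t, abs_nonneg t]

lemma rpow_taylor2 (a : ℝ) :
    (fun t : ℝ => (1+t)^a - (1 + a*t + a*(a-1)/2*t^2)) =O[nhds (0:ℝ)] fun t => |t|^3 := by
  rw [Asymptotics.isBigO_iff]
  refine ⟨2* |a|^3 + 3*a^2 + 2* |a|, ?_⟩
  have hδ : (0:ℝ) < min (1/2) (1/(2*(|a|+1))) := by positivity
  filter_upwards [Metric.ball_mem_nhds (0:ℝ) hδ] with t ht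
  rw [Metric.mem_ball, dist_zero_right, Real.norm_eq_abs] at ht
  have ht2 : |t| ≤ 1/2 := le_of_lt (lt_of_lt_of_le ht (min_le_left _ _))
  have hta : |t| * (|a|+1) ≤ 1/2 := by
    have h1 : |t| ≤ 1/(2*(|a|+1)) := le_of_lt (lt_of_lt_of_le ht (min_le_right _ _))
    have h2 : (0:ℝ) < |a| + 1 := by positivity
    rw [le_div_iff₀ (by positivity)] at h1
    linarith
  have hpos : (0:ℝ) < 1 + t := by
    rcases abs_le.1 ht2 with ⟨h1, _⟩; linarith
  set L1 := Real.log (1+t) with hL1def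
  have hrw : (1+t)^a = Real.exp (L1 * a) := Real.rpow_def_of_pos hpos a
  have hL1 : |L1| ≤ 2* |t| := log_abs_le ht2
  have hLa : |L1*a| ≤ 2* |t| * |a| := by
    rw [abs_mul]; exact mul_le_mul_of_nonneg_right hL1 (abs_nonneg a)
  have hy1 : |L1 * a| ≤ 1 := by
    refine hLa.trans ?_
    nlinarith [abs_nonneg t, abs_nonneg a]
  have hE1 := Real.exp_bound hy1 (n := 3) (by norm_num)
  have hsum : (∑ m ∈ Finset.range 3, (L1*a)^m / m.factorial) = 1 + L1*a + (L1*a)^2/2 := by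
    simp [Finset.sum_range_succ]
  rw [hsum] at hE1
  have hE1' : |Real.exp (L1*a) - (1 + L1*a + (L1*a)^2/2)| ≤ 2* |a|^3* |t|^3 := by
    have hb : ((3:ℕ).succ / ((3:ℕ).factorial * (3:ℕ)) : ℝ) = 2/9 := by
      norm_num [Nat.factorial]
    rw [hb] at hE1
    refine hE1.trans ?_
    have key : |L1*a|^3 ≤ 8* |t|^3* |a|^3 := by
      have := pow_le_pow_left₀ (abs_nonneg (L1*a)) hLa 3
      calc |L1*a|^3 ≤ (2* |t| * |a|)^3 := this
        _ = 8* |t|^3* |a|^3 := by ring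
    nlinarith [pow_nonneg (abs_nonneg t) 3, pow_nonneg (abs_nonneg a) 3,
      mul_nonneg (pow_nonneg (abs_nonneg t) 3) (pow_nonneg (abs_nonneg a) 3)]
  have hid : Real.exp (L1*a) - (1 + a*t + a*(a-1)/2*t^2)
      = (Real.exp (L1*a) - (1 + L1*a + (L1*a)^2/2))
        + a*(L1 - (t - t^2/2)) + (a^2/2)*((L1 - t)*(L1 + t)) := by ring
  have hb2 : |a*(L1 - (t - t^2/2))| ≤ |a| * (2* |t|^3) := by
    rw [abs_mul]
    exact mul_le_mul_of_nonneg_left (log_b2 ht2) (abs_nonneg a)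
  have hb3 : |(a^2/2)*((L1 - t)*(L1 + t))| ≤ (a^2/2) * (2*t^2 * (3* |t|)) := by
    rw [abs_mul, abs_mul]
    have h1 : |L1 - t| ≤ 2*t^2 := log_b1 ht2
    have h2 : |L1 + t| ≤ 3* |t| := by
      refine (abs_add_le _ _).trans ?_
      linarith
    have h3 : |a^2/2| = a^2/2 := abs_of_nonneg (by positivity)
    rw [h3]
    apply mul_le_mul_of_nonneg_left _ (by positivity)
    apply mul_le_mul h1 h2 (abs_nonneg _) (by positivity)
  have habs3 : t^2 * |t| = |t|^3 := by rw [← sq_abs]; ring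
  rw [Real.norm_eq_abs, Real.norm_eq_abs, hrw, hid]
  have hnorm : |(|t|^3)| = |t|^3 := abs_of_nonneg (by positivity)
  rw [hnorm]
  refine le_trans (abs_add_three _ _ _) ?_
  have := add_le_add (add_le_add hE1' hb2) hb3
  refine this.trans (le_of_eq ?_)
  rw [show (a^2/2) * (2*t^2 * (3* |t|)) = 3*a^2*(t^2* |t|) by ring, habs3]
  ring

lemma rpow_taylor1 (a : ℝ) :
    (fun t : ℝ => (1+t)^a - (1 + a*t)) =O[nhds (0:ℝ)] fun t => t^2 := by
  have h1 := rpow_taylor2 a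
  have habs : (fun t:ℝ => |t|^3) =O[nhds (0:ℝ)] fun t => t^2 := by
    rw [Asymptotics.isBigO_iff]
    refine ⟨1, ?_⟩
    filter_upwards [Metric.ball_mem_nhds (0:ℝ) one_pos] with t ht
    rw [Metric.mem_ball, dist_zero_right, Real.norm_eq_abs] at ht
    rw [Real.norm_eq_abs, Real.norm_eq_abs, abs_of_nonneg (by positivity)]
    calc |t|^3 = |t| * t^2 := by rw [← sq_abs]; ring
      _ ≤ 1 * t^2 := by nlinarith [sq_nonneg t]
      _ ≤ 1 * |t^2| := by rw [one_mul, one_mul]; exact le_abs_self _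
  have h2 : (fun t:ℝ => a*(a-1)/2*t^2) =O[nhds (0:ℝ)] (fun t => t^2) :=
    Asymptotics.isBigO_const_mul_self _ _ _
  have h3 := (h1.trans habs).add h2
  refine h3.congr (fun t => ?_) (fun _ => rfl)
  ring

noncomputable def TT : ℝ → ℝ := fun x => 1/(x^2 * Real.log x)

noncomputable def MM (c₁ c₂ c₃ c₄ : ℝ) : ℝ → ℝ := fun x =>
  1 + c₁/x + c₂/(x*Real.log x) + c₃/x^2 + c₄/(x^2*Real.log x)

def Exp2 (f : ℝ → ℝ) (c₁ c₂ c₃ c₄ : ℝ) : Prop :=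
  (fun x => f x - MM c₁ c₂ c₃ c₄ x) =o[atTop] TT

lemma tendsto_xlog : Tendsto (fun x:ℝ => x^2 * Real.log x) atTop atTop :=
  (tendsto_pow_atTop two_ne_zero).atTop_mul_atTop₀ Real.tendsto_log_atTop

lemma TT_tendsto : Tendsto TT atTop (nhds 0) := by
  have h := tendsto_xlog.inv_tendsto_atTop
  refine h.congr fun x => ?_
  simp [TT, one_div]

lemma TT_ne : ∀ᶠ x:ℝ in atTop, TT x ≠ 0 := by
  filter_upwards [eventually_ge_atTop (2:ℝ)] with x hx
  have hL : 0 < Real.log x := Real.log_pos (by linarith)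
  have h : 0 < x^2 * Real.log x := by positivity
  simp only [TT, one_div, ne_eq, inv_eq_zero]
  exact ne_of_gt h

lemma o_cube : (fun x:ℝ => 1/x^3) =o[atTop] TT := by
  rw [isLittleO_iff_tendsto']
  · have h : Tendsto (fun x:ℝ => Real.log x / x) atTop (nhds 0) :=
      Real.isLittleO_log_id_atTop.tendsto_div_nhds_zero
    refine h.congr' ?_
    filter_upwards [eventually_ge_atTop (2:ℝ)] with x hx
    have hx0 : x ≠ 0 := by linarith
    have hL : Real.log x ≠ 0 := ne_of_gt (Real.log_pos (by linarith))
    simp only [TT]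
    field_simp
  · filter_upwards [TT_ne] with x hx h
    exact absurd h hx

lemma o_sqlog2 : (fun x:ℝ => 1/(x^2*(Real.log x)^2)) =o[atTop] TT := by
  rw [isLittleO_iff_tendsto']
  · have h : Tendsto (fun x:ℝ => 1/Real.log x) atTop (nhds 0) := by
      simp only [one_div]; exact Real.tendsto_log_atTop.inv_tendsto_atTop
    refine h.congr' ?_
    filter_upwards [eventually_ge_atTop (2:ℝ)] with x hx
    have hx0 : x ≠ 0 := by linarith
    have hL : Real.log x ≠ 0 := ne_of_gt (Real.log_pos (by linarith))
    simp only [TT]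
    field_simp
  · filter_upwards [TT_ne] with x hx h
    exact absurd h hx

lemma isLittleO_of_le_cube {f : ℝ → ℝ} (C : ℝ)
    (h : ∀ᶠ x:ℝ in atTop, |f x| ≤ C/x^3) : f =o[atTop] TT := by
  refine IsBigO.trans_isLittleO ?_ o_cube
  rw [isBigO_iff]
  refine ⟨C, ?_⟩
  filter_upwards [h, eventually_ge_atTop (1:ℝ)] with x hx hx1
  have h3 : (0:ℝ) < x^3 := by positivity
  rw [Real.norm_eq_abs, Real.norm_eq_abs]
  calc |f x| ≤ C/x^3 := hx
    _ = C * (1/x^3) := by ring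
    _ ≤ C * |1/x^3| := by
        apply mul_le_mul_of_nonneg_left (le_abs_self _) ?_
        by_contra hC
        push_neg at hC
        have : C / x^3 < 0 := div_neg_of_neg_of_pos hC h3
        linarith [abs_nonneg (f x)]

lemma MM_tendsto_one (c₁ c₂ c₃ c₄ : ℝ) : Tendsto (MM c₁ c₂ c₃ c₄) atTop (nhds 1) := by
  have h1 : Tendsto (fun x:ℝ => c₁/x) atTop (nhds 0) := tendsto_const_nhds.div_atTop tendsto_id
  have h2 : Tendsto (fun x:ℝ => c₂/(x*Real.log x)) atTop (nhds 0) :=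
    tendsto_const_nhds.div_atTop (tendsto_id.atTop_mul_atTop₀ Real.tendsto_log_atTop)
  have h3 : Tendsto (fun x:ℝ => c₃/x^2) atTop (nhds 0) :=
    tendsto_const_nhds.div_atTop (tendsto_pow_atTop two_ne_zero)
  have h4 : Tendsto (fun x:ℝ => c₄/(x^2*Real.log x)) atTop (nhds 0) :=
    tendsto_const_nhds.div_atTop tendsto_xlog
  have := (((h1.add h2).add h3).add h4)
  have h := this.const_add (1:ℝ)
  simp only [add_zero, zero_add] at h
  convert h using 2 with x
  simp [MM]
  ring

lemma Exp2.tendsto_one {f : ℝ → ℝ} {c₁ c₂ c₃ c₄ : ℝ} (h : Exp2 f c₁ c₂ c₃ c₄) :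
    Tendsto f atTop (nhds 1) := by
  have he : Tendsto (fun x => f x - MM c₁ c₂ c₃ c₄ x) atTop (nhds 0) :=
    h.isBigO.trans_tendsto TT_tendsto
  have := he.add (MM_tendsto_one c₁ c₂ c₃ c₄)
  simpa using this

lemma MM_mul_sub (a₁ a₂ a₃ a₄ b₁ b₂ b₃ b₄ : ℝ) :
    (fun x => MM a₁ a₂ a₃ a₄ x * MM b₁ b₂ b₃ b₄ x
      - MM (a₁+b₁) (a₂+b₂) (a₃+b₃+a₁*b₁) (a₄+b₄+a₁*b₂+a₂*b₁) x) =o[atTop] TT := by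
  have hid : ∀ x : ℝ, MM a₁ a₂ a₃ a₄ x * MM b₁ b₂ b₃ b₄ x
      - MM (a₁+b₁) (a₂+b₂) (a₃+b₃+a₁*b₁) (a₄+b₄+a₁*b₂+a₂*b₁) x
      = a₂*b₂ * (1/(x^2*(Real.log x)^2))
        + ((a₁*b₃+a₃*b₁)/x^3 + (a₁*b₄+a₂*b₃+a₃*b₂+a₄*b₁)/(x^3*Real.log x)
          + (a₂*b₄+a₄*b₂)/(x^3*(Real.log x)^2) + a₃*b₃/x^4
          + (a₃*b₄+a₄*b₃)/(x^4*Real.log x) + a₄*b₄/(x^4*(Real.log x)^2)) := by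
    intro x
    simp only [MM]
    ring
  have h1 : (fun x:ℝ => a₂*b₂ * (1/(x^2*(Real.log x)^2))) =o[atTop] TT :=
    o_sqlog2.const_mul_left _
  have h2 : (fun x:ℝ => (a₁*b₃+a₃*b₁)/x^3 + (a₁*b₄+a₂*b₃+a₃*b₂+a₄*b₁)/(x^3*Real.log x)
          + (a₂*b₄+a₄*b₂)/(x^3*(Real.log x)^2) + a₃*b₃/x^4
          + (a₃*b₄+a₄*b₃)/(x^4*Real.log x) + a₄*b₄/(x^4*(Real.log x)^2)) =o[atTop] TT := by
    apply isLittleO_of_le_cube (|a₁*b₃+a₃*b₁| + |a₁*b₄+a₂*b₃+a₃*b₂+a₄*b₁|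
      + |a₂*b₄+a₄*b₂| + |a₃*b₃| + |a₃*b₄+a₄*b₃| + |a₄*b₄|)
    filter_upwards [eventually_ge_atTop (3:ℝ)] with x hx
    have hx0 : (0:ℝ) < x := by linarith
    have hL1 : (1:ℝ) ≤ Real.log x := by
      have : Real.exp 1 ≤ x := le_trans (by
        have := Real.exp_one_lt_d9
        linarith) hx
      calc (1:ℝ) = Real.log (Real.exp 1) := (Real.log_exp 1).symm
        _ ≤ Real.log x := Real.log_le_log (Real.exp_pos 1) this
    have hL0 : (0:ℝ) < Real.log x := by linarith
    have hx3 : (0:ℝ) < x^3 := by positivity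
    set L := Real.log x
    have key : ∀ c : ℝ, ∀ d : ℝ, x^3 ≤ d → |c/d| ≤ |c|/x^3 := by
      intro c d hd
      rw [abs_div, abs_of_pos (lt_of_lt_of_le hx3 hd)]
      gcongr
    have hd1 : x^3 ≤ x^3 := le_refl _
    have hd2 : x^3 ≤ x^3*L := by nlinarith
    have hd3 : x^3 ≤ x^3*L^2 := by nlinarith
    have hd4 : x^3 ≤ x^4 := by nlinarith
    have hd5 : x^3 ≤ x^4*L := by nlinarith
    have hd6 : x^3 ≤ x^4*L^2 := by nlinarith
    have tri : ∀ A B C D E F : ℝ, |A+B+C+D+E+F| ≤ |A|+|B|+|C|+|D|+|E|+|F| := by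
      intro A B C D E F
      calc |A+B+C+D+E+F| ≤ |A+B+C+D+E| + |F| := abs_add_le _ _
        _ ≤ |A+B+C+D| + |E| + |F| := by linarith [abs_add_le (A+B+C+D) E]
        _ ≤ |A+B+C| + |D| + |E| + |F| := by linarith [abs_add_le (A+B+C) D]
        _ ≤ |A+B| + |C| + |D| + |E| + |F| := by linarith [abs_add_le (A+B) C]
        _ ≤ |A|+|B|+|C|+|D|+|E|+|F| := by linarith [abs_add_le A B]
    refine (tri _ _ _ _ _ _).trans ?_
    have k1 := key (a₁*b₃+a₃*b₁) (x^3) hd1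
    have k2 := key (a₁*b₄+a₂*b₃+a₃*b₂+a₄*b₁) (x^3*L) hd2
    have k3 := key (a₂*b₄+a₄*b₂) (x^3*L^2) hd3
    have k4 := key (a₃*b₃) (x^4) hd4
    have k5 := key (a₃*b₄+a₄*b₃) (x^4*L) hd5
    have k6 := key (a₄*b₄) (x^4*L^2) hd6
    have hsum : (|a₁*b₃+a₃*b₁| + |a₁*b₄+a₂*b₃+a₃*b₂+a₄*b₁| + |a₂*b₄+a₄*b₂| + |a₃*b₃|
        + |a₃*b₄+a₄*b₃| + |a₄*b₄|)/x^3
        = |a₁*b₃+a₃*b₁|/x^3 + |a₁*b₄+a₂*b₃+a₃*b₂+a₄*b₁|/x^3 + |a₂*b₄+a₄*b₂|/x^3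
          + |a₃*b₃|/x^3 + |a₃*b₄+a₄*b₃|/x^3 + |a₄*b₄|/x^3 := by ring
    rw [hsum]
    gcongr  -- fallback below
  exact (h1.add h2).congr (fun x => (hid x).symm) (fun _ => rfl)

lemma Exp2.mul {f g : ℝ → ℝ} {a₁ a₂ a₃ a₄ b₁ b₂ b₃ b₄ : ℝ}
    (hf : Exp2 f a₁ a₂ a₃ a₄) (hg : Exp2 g b₁ b₂ b₃ b₄) :
    Exp2 (fun x => f x * g x) (a₁+b₁) (a₂+b₂) (a₃+b₃+a₁*b₁) (a₄+b₄+a₁*b₂+a₂*b₁) := by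
  have hg1 : g =O[atTop] (1 : ℝ → ℝ) := hg.tendsto_one.isBigO_one ℝ
  have hMa : (MM a₁ a₂ a₃ a₄) =O[atTop] (1 : ℝ → ℝ) := (MM_tendsto_one a₁ a₂ a₃ a₄).isBigO_one ℝ
  have t1 : (fun x => (f x - MM a₁ a₂ a₃ a₄ x) * g x) =o[atTop] TT := by
    have := hf.mul_isBigO hg1
    simpa using this
  have t2 : (fun x => MM a₁ a₂ a₃ a₄ x * (g x - MM b₁ b₂ b₃ b₄ x)) =o[atTop] TT := by
    have := hMa.mul_isLittleO hg
    simpa using this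
  have t3 := MM_mul_sub a₁ a₂ a₃ a₄ b₁ b₂ b₃ b₄
  have := (t1.add t2).add t3
  refine this.congr (fun x => ?_) (fun _ => rfl)
  ring

lemma eventually_log_ge_one : ∀ᶠ x:ℝ in atTop, 1 ≤ Real.log x := by
  filter_upwards [eventually_ge_atTop (3:ℝ)] with x hx
  have : Real.exp 1 ≤ x := by
    have := Real.exp_one_lt_d9; linarith
  calc (1:ℝ) = Real.log (Real.exp 1) := (Real.log_exp 1).symm
    _ ≤ Real.log x := Real.log_le_log (Real.exp_pos 1) this

lemma isLittleO_TT_of_cube {f : ℝ → ℝ} (h : f =O[atTop] fun x => |1/x|^3) :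
    f =o[atTop] TT := by
  rcases isBigO_iff.1 h with ⟨C, hC⟩
  apply isLittleO_of_le_cube C
  filter_upwards [hC, eventually_ge_atTop (1:ℝ)] with x h1 h2
  have hx : (0:ℝ) < x := by linarith
  rw [Real.norm_eq_abs, Real.norm_eq_abs] at h1
  have he : |(|1/x|^3)| = 1/x^3 := by
    rw [abs_of_nonneg (by positivity), abs_of_pos (by positivity)]
    rw [div_pow, one_pow]
  rw [he] at h1
  calc |f x| ≤ C * (1/x^3) := h1
    _ = C/x^3 := by ring

lemma base1 (a : ℝ) : Exp2 (fun x => (1+1/x)^a) a 0 (a*(a-1)/2) 0 := by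
  have hinv : Tendsto (fun x:ℝ => 1/x) atTop (nhds 0) := by
    simpa [one_div] using (tendsto_inv_atTop_zero : Tendsto (fun x:ℝ => x⁻¹) atTop (nhds 0))
  have hcomp := (rpow_taylor2 a).comp_tendsto hinv
  have h1 : (fun x:ℝ => (1+1/x)^a - (1 + a*(1/x) + a*(a-1)/2*(1/x)^2)) =o[atTop] TT :=
    isLittleO_TT_of_cube hcomp
  unfold Exp2
  refine h1.congr (fun x => ?_) (fun _ => rfl)
  simp only [MM]
  ring

lemma base2 (a : ℝ) : Exp2 (fun x => (1-1/x)^a) (-a) 0 (a*(a-1)/2) 0 := by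
  have hinv : Tendsto (fun x:ℝ => -(1/x)) atTop (nhds 0) := by
    have : Tendsto (fun x:ℝ => 1/x) atTop (nhds 0) := by
      simpa [one_div] using (tendsto_inv_atTop_zero : Tendsto (fun x:ℝ => x⁻¹) atTop (nhds 0))
    simpa using this.neg
  have hcomp := (rpow_taylor2 a).comp_tendsto hinv
  have hcomp2 : (fun x:ℝ => (1-1/x)^a - (1 + a*(-(1/x)) + a*(a-1)/2*(-(1/x))^2))
      =O[atTop] fun x => |1/x|^3 := by
    refine hcomp.congr (fun x => ?_) (fun x => ?_)
    · show (1 + -(1/x))^a - _ = _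
      rw [show (1:ℝ) + -(1/x) = 1 - 1/x by ring]
    · show |(-(1/x))|^3 = |1/x|^3
      rw [abs_neg]
  have h1 : (fun x:ℝ => (1-1/x)^a - (1 + a*(-(1/x)) + a*(a-1)/2*(-(1/x))^2)) =o[atTop] TT :=
    isLittleO_TT_of_cube hcomp2
  unfold Exp2
  refine h1.congr (fun x => ?_) (fun _ => rfl)
  simp only [MM]
  ring

lemma hinv_tendsto : Tendsto (fun x:ℝ => 1/x) atTop (nhds 0) := by
  simpa [one_div] using (tendsto_inv_atTop_zero : Tendsto (fun x:ℝ => x⁻¹) atTop (nhds 0))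


lemma abs_one_div_le_half {x : ℝ} (hx : 2 ≤ x) : |1/x| ≤ 1/2 := by
  have hx0 : (0:ℝ) < x := by linarith
  rw [abs_of_pos (by positivity), div_le_div_iff₀ hx0 (by norm_num)]
  linarith

lemma log_ratio_plus {x : ℝ} (hx : 2 ≤ x) (hL : 1 ≤ Real.log x) :
    Real.log (x+1)/Real.log x = 1 + Real.log (1+1/x)/Real.log x := by
  have hx0 : x ≠ 0 := by intro h; rw [h] at hx; linarith
  have hL0 : Real.log x ≠ 0 := by linarith
  have hsplit : x + 1 = x*(1+1/x) := by field_simp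
  rw [hsplit, Real.log_mul hx0 (by positivity), add_div, div_self hL0]

lemma log_ratio_minus {x : ℝ} (hx : 2 ≤ x) (hL : 1 ≤ Real.log x) :
    Real.log (x-1)/Real.log x = 1 + Real.log (1-1/x)/Real.log x := by
  have hx0 : x ≠ 0 := by intro h; rw [h] at hx; linarith
  have hL0 : Real.log x ≠ 0 := by linarith
  have hpos : (0:ℝ) < 1 - 1/x := by
    have : 1/x ≤ 1/2 := by rw [div_le_div_iff₀ (by linarith) (by norm_num)]; linarith
    linarith
  have hsplit : x - 1 = x*(1-1/x) := by field_simp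
  rw [hsplit, Real.log_mul hx0 (ne_of_gt hpos), add_div, div_self hL0]

lemma base34_core (a : ℝ) (σ : ℝ) (hσ : σ = 1 ∨ σ = -1) :
    (fun x => (1 + Real.log (1+σ*(1/x))/Real.log x)^a
      - MM 0 (σ*a) 0 (-a/2) x) =o[atTop] TT := by
  set w : ℝ → ℝ := fun x => Real.log (1+σ*(1/x))/Real.log x with hwdef
  have hσ1 : |σ| = 1 := by rcases hσ with h | h <;> rw [h] <;> norm_num
  have hlog0 : Tendsto (fun x:ℝ => Real.log (1+σ*(1/x))) atTop (nhds 0) := by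
    have hc : ContinuousAt Real.log 1 := Real.continuousAt_log one_ne_zero
    have h1 : Tendsto (fun x:ℝ => 1+σ*(1/x)) atTop (nhds 1) := by
      have := (hinv_tendsto.const_mul σ).const_add (1:ℝ)
      simpa using this
    have := hc.tendsto.comp h1
    simpa [Function.comp_def] using this
  have hinvlog : Tendsto (fun x:ℝ => (Real.log x)⁻¹) atTop (nhds 0) :=
    Real.tendsto_log_atTop.inv_tendsto_atTop
  have hwto : Tendsto w atTop (nhds 0) := by
    have := hlog0.mul hinvlog
    simpa [hwdef, div_eq_mul_inv] using this
  have hcomp := (rpow_taylor1 a).comp_tendsto hwto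
  have hwb : ∀ᶠ x:ℝ in atTop, |w x| ≤ 2/(x*Real.log x) := by
    filter_upwards [eventually_ge_atTop (2:ℝ), eventually_log_ge_one] with x hx hL
    have hx0 : (0:ℝ) < x := by linarith
    have hL0 : (0:ℝ) < Real.log x := by linarith
    have habs : |σ*(1/x)| ≤ 1/2 := by
      rw [abs_mul, hσ1, one_mul]; exact abs_one_div_le_half hx
    have hlb : |Real.log (1+σ*(1/x))| ≤ 2*(1/x) := by
      have := log_abs_le habs
      rwa [abs_mul, hσ1, one_mul, abs_of_pos (show (0:ℝ) < 1/x by positivity)] at this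
    simp only [hwdef]
    rw [abs_div, abs_of_pos hL0, div_le_div_iff₀ hL0 (by positivity)]
    calc |Real.log (1+σ*(1/x))| * (x*Real.log x) ≤ (2*(1/x)) * (x*Real.log x) := by
          apply mul_le_mul_of_nonneg_right hlb (by positivity)
      _ = 2 * Real.log x := by field_simp
  have hw2 : (fun x => (w x)^2) =O[atTop] fun x:ℝ => 1/(x^2*(Real.log x)^2) := by
    rw [isBigO_iff]
    refine ⟨4, ?_⟩
    filter_upwards [hwb, eventually_ge_atTop (2:ℝ), eventually_log_ge_one] with x hb hx hL
    have hx0 : (0:ℝ) < x := by linarith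
    have hL0 : (0:ℝ) < Real.log x := by linarith
    rw [Real.norm_eq_abs, Real.norm_eq_abs, abs_pow]
    have h2 : |w x|^2 ≤ (2/(x*Real.log x))^2 := pow_le_pow_left₀ (abs_nonneg _) hb 2
    refine h2.trans ?_
    rw [abs_of_pos (show (0:ℝ) < 1/(x^2*(Real.log x)^2) by positivity)]
    rw [div_pow]
    rw [show ((2:ℝ))^2 = 4 by norm_num, show (x*Real.log x)^2 = x^2*(Real.log x)^2 by ring]
    rw [div_eq_mul_one_div]
  have hmain : (fun x => (1 + w x)^a - (1 + a * w x)) =o[atTop] TT :=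
    (hcomp.trans hw2).trans_isLittleO o_sqlog2
  have hlin : (fun x => (1 + a * w x) - MM 0 (σ*a) 0 (-a/2) x) =o[atTop] TT := by
    apply isLittleO_of_le_cube (2*|a|)
    filter_upwards [eventually_ge_atTop (2:ℝ), eventually_log_ge_one] with x hx hL
    have hxp : (0:ℝ) < x := by linarith
    have hx0 : x ≠ 0 := ne_of_gt hxp
    have hL0 : (0:ℝ) < Real.log x := by linarith
    have hL0' : Real.log x ≠ 0 := ne_of_gt hL0
    have hσ2 : σ^2 = 1 := by rcases hσ with h | h <;> rw [h] <;> norm_num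
    have hid : (1 + a * w x) - MM 0 (σ*a) 0 (-a/2) x
        = a * ((Real.log (1+σ*(1/x)) - (σ*(1/x) - (σ*(1/x))^2/2))/Real.log x) := by
      simp only [MM, hwdef]
      rw [mul_pow, hσ2, one_mul]
      field_simp
      ring
    rw [hid]
    have habs : |σ*(1/x)| ≤ 1/2 := by
      rw [abs_mul, hσ1, one_mul]; exact abs_one_div_le_half hx
    have hb := log_b2 habs
    have h5 : |σ*(1/x)|^3 = 1/x^3 := by
      rw [abs_mul, hσ1, one_mul, abs_of_pos (show (0:ℝ) < 1/x by positivity), div_pow, one_pow]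
    rw [h5] at hb
    rw [abs_mul, abs_div, abs_of_pos hL0]
    have h7 : |Real.log (1+σ*(1/x)) - (σ*(1/x) - (σ*(1/x))^2/2)|/Real.log x
        ≤ |Real.log (1+σ*(1/x)) - (σ*(1/x) - (σ*(1/x))^2/2)| :=
      div_le_self (abs_nonneg _) hL
    calc |a| * (|Real.log (1+σ*(1/x)) - (σ*(1/x) - (σ*(1/x))^2/2)|/Real.log x)
        ≤ |a| * (2*(1/x^3)) := by
          apply mul_le_mul_of_nonneg_left _ (abs_nonneg a)
          refine h7.trans ?_
          linarith [hb]
      _ = 2*|a|/x^3 := by ring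
  have hsum := hmain.add hlin
  refine hsum.congr (fun x => ?_) (fun _ => rfl)
  ring

lemma base3 (a : ℝ) : Exp2 (fun x => (Real.log (x+1)/Real.log x)^a) 0 a 0 (-a/2) := by
  have h := base34_core a 1 (Or.inl rfl)
  unfold Exp2
  refine h.congr' ?_ (EventuallyEq.refl _ _)
  filter_upwards [eventually_ge_atTop (2:ℝ), eventually_log_ge_one] with x hx hL
  rw [show (1:ℝ) + 1*(1/x) = 1 + 1/x by ring, ← log_ratio_plus hx hL, one_mul]

lemma base4 (a : ℝ) : Exp2 (fun x => (Real.log (x-1)/Real.log x)^a) 0 (-a) 0 (-a/2) := by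
  have h := base34_core a (-1) (Or.inr rfl)
  unfold Exp2
  refine h.congr' ?_ (EventuallyEq.refl _ _)
  filter_upwards [eventually_ge_atTop (2:ℝ), eventually_log_ge_one] with x hx hL
  rw [show (1:ℝ) + (-1)*(1/x) = 1 - 1/x by ring, ← log_ratio_minus hx hL]
  rw [show (-1:ℝ)*a = -a by ring]

lemma Exp2_congr {f g : ℝ→ℝ} {c₁ c₂ c₃ c₄ : ℝ} (h : Exp2 f c₁ c₂ c₃ c₄)
    (he : g =ᶠ[atTop] f) : Exp2 g c₁ c₂ c₃ c₄ := by
  refine h.congr' ?_ (EventuallyEq.refl _ _)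
  filter_upwards [he] with x hx
  rw [hx]

lemma ratio_rpow {b c : ℝ} (hb : 0 < b) (hc : 0 < c) (a : ℝ) :
    (b/c)^(-a) = c^a/b^a := by
  rw [Real.rpow_neg (by positivity), Real.div_rpow hb.le hc.le, inv_div]

lemma key_lemma {u r rv : ℝ→ℝ} {u₁ u₂ u₃ u₄ r₁ r₂ r₃ r₄ w₁ w₂ w₃ w₄ : ℝ} (K : ℝ)
    (hu : Exp2 u u₁ u₂ u₃ u₄) (hr : Exp2 r r₁ r₂ r₃ r₄) (hrv : Exp2 rv w₁ w₂ w₃ w₄)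
    (h1 : r₁ - u₁ - w₁ = 0) (h2 : r₂ - u₂ - w₂ = 0) (h3 : r₃ - u₃ - w₃ = 0)
    (h4 : r₄ - u₄ - w₄ = K) :
    (fun x => (1 - u x + r x - rv x) - K * TT x) =o[atTop] TT := by
  have h := (hr.sub hu).sub hrv
  refine h.congr (fun x => ?_) (fun _ => rfl)
  simp only [MM, TT]
  linear_combination -h1/x - h2/(x*Real.log x) - h3/(x^2) - h4/(x^2*Real.log x)

noncomputable def uu (p : ℝ) : ℝ → ℝ := fun x =>
  (x^(2*p)*Real.log x^p)/((x+1)^(2*p)*Real.log (x+1)^p)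
noncomputable def vv (p : ℝ) : ℝ → ℝ := fun x =>
  (x^(2*p)*Real.log x^p)/((x-1)^(2*p)*Real.log (x-1)^p)
noncomputable def rr (p ε : ℝ) : ℝ → ℝ := fun x =>
  ((x-1)^(2*p+1)*Real.log (x-1)^(p+ε))/(x^(2*p+1)*Real.log x^(p+ε))

lemma basic_pos : ∀ᶠ x:ℝ in atTop,
    0 < x ∧ 0 < x - 1 ∧ 0 < x + 1 ∧ 0 < Real.log x ∧ 0 < Real.log (x+1)
      ∧ 0 < Real.log (x-1) := by
  filter_upwards [eventually_ge_atTop (3:ℝ)] with x hx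
  refine ⟨by linarith, by linarith, by linarith, Real.log_pos (by linarith),
    Real.log_pos (by linarith), Real.log_pos (by linarith)⟩

lemma uu_eq (p : ℝ) : uu p =ᶠ[atTop]
    fun x => (1+1/x)^(-(2*p)) * (Real.log (x+1)/Real.log x)^(-p) := by
  filter_upwards [basic_pos] with x ⟨hx, hx1, hx2, hL, hL1, hL2⟩
  have e1 : (1:ℝ)+1/x = (x+1)/x := by field_simp
  rw [e1, ratio_rpow hx2 hx (2*p), ratio_rpow hL1 hL p, div_mul_div_comm]
  rfl

lemma vv_eq (p : ℝ) : vv p =ᶠ[atTop]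
    fun x => (1-1/x)^(-(2*p)) * (Real.log (x-1)/Real.log x)^(-p) := by
  filter_upwards [basic_pos] with x ⟨hx, hx1, hx2, hL, hL1, hL2⟩
  have e1 : (1:ℝ)-1/x = (x-1)/x := by field_simp
  rw [e1, ratio_rpow hx1 hx (2*p), ratio_rpow hL2 hL p, div_mul_div_comm]
  rfl

lemma rr_eq (p ε : ℝ) : rr p ε =ᶠ[atTop]
    fun x => (1-1/x)^(2*p+1) * (Real.log (x-1)/Real.log x)^(p+ε) := by
  filter_upwards [basic_pos] with x ⟨hx, hx1, hx2, hL, hL1, hL2⟩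
  have e1 : (1:ℝ)-1/x = (x-1)/x := by field_simp
  rw [e1, Real.div_rpow hx1.le hx.le, Real.div_rpow hL2.le hL.le, div_mul_div_comm]
  rfl

section main
variable (p ε : ℝ)

lemma hu_exp : Exp2 (uu p) (-(2*p)+0) (0+(-p))
    ((-(2*p))*((-(2*p))-1)/2+0+(-(2*p))*0) (0+(-(-p)/2)+(-(2*p))*(-p)+0*0) :=
  Exp2_congr (Exp2.mul (base1 (-(2*p))) (base3 (-p))) (uu_eq p)

lemma hv_exp : Exp2 (vv p) (-(-(2*p))+0) (0+(-(-p)))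
    ((-(2*p))*((-(2*p))-1)/2+0+(-(-(2*p)))*0) (0+(-(-p)/2)+(-(-(2*p)))*(-(-p))+0*0) :=
  Exp2_congr (Exp2.mul (base2 (-(2*p))) (base4 (-p))) (vv_eq p)

lemma hr_exp : Exp2 (rr p ε) (-(2*p+1)+0) (0+(-(p+ε)))
    ((2*p+1)*((2*p+1)-1)/2+0+(-(2*p+1))*0) (0+(-(p+ε)/2)+(-(2*p+1))*(-(p+ε))+0*0) :=
  Exp2_congr (Exp2.mul (base2 (2*p+1)) (base4 (p+ε))) (rr_eq p ε)

lemma N_limit :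
    Tendsto (fun x => x^2 * Real.log x *
      (1 - uu p x + rr p ε x - (fun y => rr p ε y * vv p y) x)) atTop
      (nhds (2*(p*ε))) := by
  have hrv := Exp2.mul (hr_exp p ε) (hv_exp p)
  have key := key_lemma (2*(p*ε)) (hu_exp p) (hr_exp p ε) hrv
    (by ring) (by ring) (by ring) (by ring)
  have hdiv := key.tendsto_div_nhds_zero
  have h2 : Tendsto (fun x => x^2 * Real.log x *
      (1 - uu p x + rr p ε x - (fun y => rr p ε y * vv p y) x) - 2*(p*ε)) atTop (nhds 0) := by
    refine hdiv.congr' ?_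
    filter_upwards [basic_pos] with x ⟨hx, hx1, hx2, hL, hL1, hL2⟩
    have hT : TT x ≠ 0 := by
      simp only [TT, one_div, ne_eq, inv_eq_zero]
      positivity
    simp only [TT] at hT ⊢
    field_simp
  have := h2.add (tendsto_const_nhds (x := (2*(p*ε))))
  simpa using this

lemma E_limit :
    Tendsto (fun x => x^2 * Real.log x *
      (1 - uu p x + rr p ε x - rr p ε x * vv p x) / (1 + rr p ε x)) atTop
      (nhds (p*ε)) := by
  have h1 := N_limit p ε
  have hrl : Tendsto (fun x => 1 + rr p ε x) atTop (nhds 2) := by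
    have := (hr_exp p ε).tendsto_one.const_add (1:ℝ)
    norm_num at this
    exact this
  have h2 := h1.div hrl (show (2:ℝ) ≠ 0 by norm_num)
  have h3 : (2*(p*ε))/2 = p*ε := by ring
  rw [h3] at h2
  exact h2
end main

noncomputable def F (p ε : ℝ) : ℝ → ℝ := fun x =>
  x ^ (2 : ℝ) * Real.log x -
    x ^ (2 * p + 2) * Real.log x ^ (p + 1) *
      ((x ^ (2 * p + 1) * Real.log x ^ (p + ε) /
            ((x + 1) ^ (2 * p) * Real.log (x + 1) ^ p) +
          (x - 1) ^ (2 * p + 1) * Real.log (x - 1) ^ (p + ε) /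
            ((x - 1) ^ (2 * p) * Real.log (x - 1) ^ p)) /
        (x ^ (2 * p + 1) * Real.log x ^ (p + ε) +
          (x - 1) ^ (2 * p + 1) * Real.log (x - 1) ^ (p + ε)))

lemma F_eq (p ε : ℝ) : F p ε =ᶠ[atTop] fun x => x^2 * Real.log x *
      (1 - uu p x + rr p ε x - rr p ε x * vv p x) / (1 + rr p ε x) := by
  filter_upwards [basic_pos] with x ⟨hx, hx1, hx2, hL, hL1, hL2⟩
  have e1 : x^(2*p+2) = x^(2*p) * x^(2:ℝ) := by rw [Real.rpow_add hx]
  have e2 : x^(2*p+1) = x^(2*p) * x := by rw [Real.rpow_add hx, Real.rpow_one]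
  have e3 : (x-1)^(2*p+1) = (x-1)^(2*p) * (x-1) := by rw [Real.rpow_add hx1, Real.rpow_one]
  have e4 : Real.log x^(p+1) = Real.log x^p * Real.log x := by
    rw [Real.rpow_add hL, Real.rpow_one]
  have e5 : Real.log x^(p+ε) = Real.log x^p * Real.log x^ε := Real.rpow_add hL p ε
  have e6 : Real.log (x-1)^(p+ε) = Real.log (x-1)^p * Real.log (x-1)^ε :=
    Real.rpow_add hL2 p ε
  have e7 : x^(2:ℝ) = x^(2:ℕ) := by
    rw [show (2:ℝ) = ((2:ℕ):ℝ) by norm_num, Real.rpow_natCast]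
  simp only [F, uu, vv, rr]
  rw [e1, e2, e3, e4, e5, e6, e7]
  have hP : (0:ℝ) < x^(2*p) := Real.rpow_pos_of_pos hx _
  have hQ : (0:ℝ) < (x-1)^(2*p) := Real.rpow_pos_of_pos hx1 _
  have hR : (0:ℝ) < (x+1)^(2*p) := Real.rpow_pos_of_pos hx2 _
  have hC : (0:ℝ) < Real.log x^p := Real.rpow_pos_of_pos hL _
  have hC1 : (0:ℝ) < Real.log (x+1)^p := Real.rpow_pos_of_pos hL1 _
  have hC2 : (0:ℝ) < Real.log (x-1)^p := Real.rpow_pos_of_pos hL2 _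
  have hEe : (0:ℝ) < Real.log x^ε := Real.rpow_pos_of_pos hL _
  have hE2 : (0:ℝ) < Real.log (x-1)^ε := Real.rpow_pos_of_pos hL2 _
  have hg : (0:ℝ) < x^(2*p) * x * (Real.log x^p * Real.log x^ε) := by positivity
  have hgm : (0:ℝ) < (x-1)^(2*p) * (x-1) * (Real.log (x-1)^p * Real.log (x-1)^ε) := by
    positivity
  have hsum : x^(2*p) * x * (Real.log x^p * Real.log x^ε)
      + (x-1)^(2*p) * (x-1) * (Real.log (x-1)^p * Real.log (x-1)^ε) ≠ 0 := by
    positivity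
  have hrpos : (0:ℝ) < 1 + ((x-1)^(2*p) * (x-1) * (Real.log (x-1)^p * Real.log (x-1)^ε))
      / (x^(2*p) * x * (Real.log x^p * Real.log x^ε)) := by positivity
  have h1r : 1 + ((x-1)^(2*p) * (x-1) * (Real.log (x-1)^p * Real.log (x-1)^ε))
      / (x^(2*p) * x * (Real.log x^p * Real.log x^ε)) ≠ 0 := ne_of_gt hrpos
  field_simp
  ring

end stmt10aux

/-- the limit computation (eq. (25) of the paper). -/
theorem stmt_10 (p ε : ℝ) (hp : 0 < p) (hε : 0 < ε) :
    Tendsto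
      (fun n : ℕ =>
        (n : ℝ) ^ (2 : ℝ) * Real.log n -
          (n : ℝ) ^ (2 * p + 2) * Real.log n ^ (p + 1) *
            (((n : ℝ) ^ (2 * p + 1) * Real.log n ^ (p + ε) /
                  (((n : ℝ) + 1) ^ (2 * p) * Real.log ((n : ℝ) + 1) ^ p) +
                ((n : ℝ) - 1) ^ (2 * p + 1) * Real.log ((n : ℝ) - 1) ^ (p + ε) /
                  (((n : ℝ) - 1) ^ (2 * p) * Real.log ((n : ℝ) - 1) ^ p)) /
              ((n : ℝ) ^ (2 * p + 1) * Real.log n ^ (p + ε) +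
                ((n : ℝ) - 1) ^ (2 * p + 1) * Real.log ((n : ℝ) - 1) ^ (p + ε))))
      atTop (nhds (p * ε)) := by
  have hF : Tendsto (F p ε) atTop (nhds (p * ε)) :=
    Tendsto.congr' (F_eq p ε).symm (E_limit p ε)
  exact hF.comp tendsto_natCast_atTop_atTop
end

section
/- Let σ > 1, set p = 1/(σ−1), and let ε > 0. Then there exist an integer n0 ≥ 2 and a real δ > 0 such that, defining for integers n ≥ 0 the sequences w_n = (n+n0)^{2p+1} (ln(n+n0))^{p+ε} and u_n = δ / ((n+n0)^{2p} (ln(n+n0))^{p}), one has u_1 − u_0 + u_0^σ ≤ 0 and, for every n ≥ 1, (w_n u_{n+1} + w_{n−1} u_{n−1}) / (w_n + w_{n−1}) − u_n + u_n^σ ≤ 0. -/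
open Real

/-!
With `t = n + n0`, `F t = t^(2p+1) (log t)^(p+ε)` and `g t = t^(-2p) (log t)^(-p)` one has
`w_n = F t`, `u_n = δ g t` and, as `p σ = p + 1`, `u_n^σ = δ^σ t^(-2p-2) (log t)^(-p-1)`.
Multiplied by `(w_n + w_{n-1}) / δ`, the `n`-th inequality asks that
`δ^(σ-1) (w_n + w_{n-1}) g(t)^σ`, which is at most `2 δ^(σ-1) (log t)^(ε-1) / t`, be bounded by
minus the discrete divergence `F(t) (g(t+1) - g(t)) - F(t-1) (g(t) - g(t-1))`.
Its continuous analogue `-(F g')' = p (2 ε (log t)^(ε-1) + (ε-1) (log t)^(ε-2)) / t` is positive for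
large `t`: the leading terms of `F' g'` and `F g''` cancel, and the extra power `ε` of `log t` in
the weight leaves this remainder. By the mean value theorem the discrete quantities lie between
values of the continuous ones at points at most `2` apart, which costs relative errors `O(1 / t)`,
negligible against the relative size `1 / log t` of the remainder. So `δ^(σ-1) ≤ p ε / 2` and `n0`
large give every inequality with `n ≥ 1`, and a smaller `δ` also gives the one at `n = 0`.
-/

open Filter Set

noncomputable def rpowLog (a b t : ℝ) : ℝ := t ^ a * log t ^ b

noncomputable def rpowLogDeriv (a b t : ℝ) : ℝ := rpowLog (a - 1) b t * (a + b / log t)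

noncomputable def rpowLogDeriv2 (a b t : ℝ) : ℝ :=
  rpowLog (a - 2) b t * ((a - 1 + b / log t) * (a + b / log t) - b / log t ^ 2)

/-- Multiplied by `w_n + w_{n-1}`, the weighted Laplacian of `u` at `n` is
`weightedDiff w u (n - 1)`, with `w` and `u` extended to real arguments. -/
def weightedDiff (F g : ℝ → ℝ) (y : ℝ) : ℝ :=
  F (y + 1) * (g (y + 2) - g (y + 1)) - F y * (g (y + 1) - g y)

section rpowLog

variable {a b c d t : ℝ}

lemma rpowLog_pos (ht : 1 < t) : 0 < rpowLog a b t :=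
  mul_pos (rpow_pos_of_pos (by linarith) a) (rpow_pos_of_pos (log_pos ht) b)

lemma rpowLog_mul_rpowLog (ht : 1 < t) :
    rpowLog a b t * rpowLog c d t = rpowLog (a + c) (b + d) t := by
  simp only [rpowLog, rpow_add (zero_lt_one.trans ht), rpow_add (log_pos ht)]
  ring

lemma rpowLog_rpow (ht : 1 < t) (s : ℝ) : rpowLog a b t ^ s = rpowLog (a * s) (b * s) t := by
  rw [rpowLog, mul_rpow (rpow_nonneg (zero_lt_one.trans ht).le a)
    (rpow_nonneg (log_pos ht).le b), rpowLog, rpow_mul (zero_lt_one.trans ht).le,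
    rpow_mul (log_pos ht).le]

lemma rpowLog_neg (ht : 1 < t) : rpowLog (-a) (-b) t = (t ^ a * log t ^ b)⁻¹ := by
  rw [rpowLog, rpow_neg (zero_lt_one.trans ht).le, rpow_neg (log_pos ht).le, mul_inv]

lemma rpowLog_sub_one (ht : 1 < t) : rpowLog (a - 1) b t = rpowLog a b t / t := by
  rw [rpowLog, rpowLog, rpow_sub_one (zero_lt_one.trans ht).ne']
  ring

lemma hasDerivAt_rpowLog (ht : 1 < t) : HasDerivAt (rpowLog a b) (rpowLogDeriv a b t) t := by
  have ht0 : t ≠ 0 := (zero_lt_one.trans ht).ne'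
  have hl : log t ≠ 0 := (log_pos ht).ne'
  refine ((hasDerivAt_rpow_const (p := a) (Or.inl ht0)).mul
    ((hasDerivAt_log ht0).rpow_const (p := b) (Or.inl hl))).congr_deriv ?_
  rw [rpowLogDeriv, rpowLog_sub_one ht, rpowLog, rpow_sub_one ht0, rpow_sub_one hl]
  field_simp

lemma hasDerivAt_rpowLogDeriv (ht : 1 < t) :
    HasDerivAt (rpowLogDeriv a b) (rpowLogDeriv2 a b t) t := by
  have ht0 : t ≠ 0 := (zero_lt_one.trans ht).ne'
  have hl : log t ≠ 0 := (log_pos ht).ne'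
  have hinv : HasDerivAt (fun s => a + b / log s) (-(b * t⁻¹) / log t ^ 2) t := by
    simpa [div_eq_mul_inv, neg_div, mul_assoc] using
      (((hasDerivAt_log ht0).inv hl).const_mul b).const_add a
  refine ((hasDerivAt_rpowLog (a := a - 1) (b := b) ht).mul hinv).congr_deriv ?_
  rw [rpowLogDeriv2, rpowLogDeriv, show a - 2 = a - 1 - 1 by ring,
    rpowLog_sub_one ht (a := a - 1)]
  field_simp
  ring

lemma rpowLog_le_rpowLog (ha : 0 ≤ a) (hb : 0 ≤ b) (hc : 1 < c) (hct : c ≤ t) :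
    rpowLog a b c ≤ rpowLog a b t :=
  mul_le_mul (rpow_le_rpow (by linarith) hct ha)
    (rpow_le_rpow (log_pos hc).le (log_le_log (by linarith) hct) hb)
    (rpow_nonneg (log_pos hc).le b) (rpow_nonneg (by linarith) a)

lemma rpowLog_le_rpowLog_of_nonpos (ha : a ≤ 0) (hb : b ≤ 0) (hc : 1 < c) (hct : c ≤ t) :
    rpowLog a b t ≤ rpowLog a b c :=
  mul_le_mul (rpow_le_rpow_of_nonpos (by linarith) hct ha)
    (rpow_le_rpow_of_nonpos (log_pos hc) (log_le_log (by linarith) hct) hb)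
    (rpow_nonneg (log_pos (hc.trans_le hct)).le b) (rpow_nonneg (by linarith) a)

end rpowLog

lemma exists_mem_Ioo_sub_eq {f f' : ℝ → ℝ} {a : ℝ}
    (hf : ∀ t ∈ Icc a (a + 1), HasDerivAt f (f' t) t) :
    ∃ c ∈ Ioo a (a + 1), f (a + 1) - f a = f' c := by
  obtain ⟨c, hc, h⟩ := exists_hasDerivAt_eq_slope f f' (lt_add_one a)
    (fun t ht => (hf t ht).continuousAt.continuousWithinAt)
    (fun t ht => hf t (Ioo_subset_Icc_self ht))
  exact ⟨c, hc, by rw [h, add_sub_cancel_left, div_one]⟩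

section rpowLogDiff

variable {a b y : ℝ}

lemma rpowLog_add_one_sub_ge (ha : 1 ≤ a) (hb : 0 ≤ b) (hy : 1 < y) :
    rpowLog (a - 1) b y * (a + b / log (y + 1)) ≤ rpowLog a b (y + 1) - rpowLog a b y := by
  obtain ⟨c, hc, h⟩ := exists_mem_Ioo_sub_eq (f := rpowLog a b)
    (fun t ht => hasDerivAt_rpowLog (hy.trans_le ht.1))
  have hc1 : 1 < c := hy.trans hc.1
  rw [h, rpowLogDeriv]
  exact mul_le_mul (rpowLog_le_rpowLog (by linarith) hb hy hc.1.le)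
    (add_le_add_right (div_le_div_of_nonneg_left hb (log_pos hc1)
      (log_le_log (by linarith) hc.2.le)) a)
    (add_nonneg (by linarith) (div_nonneg hb (log_pos (by linarith)).le)) (rpowLog_pos hc1).le

lemma rpowLog_add_one_le (ha : a ≤ 0) (hb : b ≤ -a * log y) (hy : 1 < y) :
    rpowLog a b (y + 1) ≤ rpowLog a b y := by
  obtain ⟨c, hc, h⟩ := exists_mem_Ioo_sub_eq (f := rpowLog a b)
    (fun t ht => hasDerivAt_rpowLog (hy.trans_le ht.1))
  have hc1 : 1 < c := hy.trans hc.1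
  have hlc : log y ≤ log c := log_le_log (by linarith) hc.1.le
  have hsign : a + b / log c ≤ 0 := by
    rw [← mul_div_cancel_right₀ a (log_pos hc1).ne', ← add_div]
    exact div_nonpos_of_nonpos_of_nonneg (by nlinarith) (log_pos hc1).le
  rw [← sub_nonpos, h]
  exact mul_nonpos_of_nonneg_of_nonpos (rpowLog_pos hc1).le hsign

lemma neg_rpowLogDeriv_pos (ha : a < 0) (hb : b ≤ 0) {t : ℝ} (ht : 1 < t) :
    0 < -rpowLogDeriv a b t := by
  rw [rpowLogDeriv, ← mul_neg]
  exact mul_pos (rpowLog_pos ht)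
    (by linarith [div_nonpos_of_nonpos_of_nonneg hb (log_pos ht).le])

lemma neg_rpowLogDeriv_le (ha : a ≤ 0) (hb : b ≤ 0) {s t : ℝ} (hs : 1 < s) (hst : s ≤ t) :
    -rpowLogDeriv a b t ≤ -rpowLogDeriv a b s := by
  have hl : 0 < log s := log_pos hs
  have hlt : log s ≤ log t := log_le_log (by linarith) hst
  simp only [rpowLogDeriv, ← mul_neg, neg_add, ← neg_div]
  apply mul_le_mul (rpowLog_le_rpowLog_of_nonpos (by linarith) hb hs hst) _ _
    (rpowLog_pos hs).le
  · gcongr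
    linarith
  · linarith [div_nonneg (by linarith : 0 ≤ -b) (by linarith : 0 ≤ log t)]

lemma rpowLog_sub_rpowLog_add_one_ge (ha : a ≤ 0) (hb : b ≤ 0) (hy : 1 < y) :
    -rpowLogDeriv a b (y + 1) ≤ rpowLog a b y - rpowLog a b (y + 1) := by
  obtain ⟨c, hc, h⟩ := exists_mem_Ioo_sub_eq (f := rpowLog a b)
    (fun t ht => hasDerivAt_rpowLog (hy.trans_le ht.1))
  rw [← neg_sub, h]
  exact neg_rpowLogDeriv_le ha hb (hy.trans hc.1) hc.2.le

lemma rpowLog_add_one_lt (ha : a < 0) (hb : b ≤ 0) (hy : 1 < y) :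
    rpowLog a b (y + 1) < rpowLog a b y := by
  linarith [neg_rpowLogDeriv_pos ha hb (show 1 < y + 1 by linarith),
    rpowLog_sub_rpowLog_add_one_ge ha.le hb hy]

lemma rpowLogDeriv2_le (ha : a ≤ 0) (hb : b ≤ 0) {s t : ℝ} (hs : 1 < s) (hst : s ≤ t) :
    rpowLogDeriv2 a b t ≤ rpowLogDeriv2 a b s := by
  have hl : 0 < log s := log_pos hs
  have hℓ : (log t)⁻¹ ≤ (log s)⁻¹ := inv_anti₀ hl (log_le_log (by linarith) hst)
  have hℓ0 : 0 ≤ (log t)⁻¹ := inv_nonneg.2 (log_nonneg (by linarith))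
  -- the bracket is increasing in `ℓ = 1 / log t ≥ 0`
  have key : ∀ ℓ : ℝ, (a - 1 + b * ℓ) * (a + b * ℓ) - b * ℓ ^ 2
      = (1 + (-a - b * ℓ)) * (-a - b * ℓ) + (-b) * ℓ ^ 2 := fun ℓ => by ring
  simp only [rpowLogDeriv2, div_eq_mul_inv, ← inv_pow, key]
  have hX : -a - b * (log t)⁻¹ ≤ -a - b * (log s)⁻¹ := by nlinarith
  have hX0 : 0 ≤ -a - b * (log t)⁻¹ := by nlinarith
  apply mul_le_mul (rpowLog_le_rpowLog_of_nonpos (by linarith) hb hs hst) _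
    (add_nonneg (mul_nonneg (by linarith) hX0) (mul_nonneg (by linarith) (sq_nonneg _)))
    (rpowLog_pos hs).le
  gcongr <;> linarith

lemma second_diff_rpowLog_le (ha : a ≤ 0) (hb : b ≤ 0) (hy : 1 < y) :
    rpowLog a b (y + 2) - 2 * rpowLog a b (y + 1) + rpowLog a b y ≤ rpowLogDeriv2 a b y := by
  obtain ⟨c, hc, h⟩ := exists_mem_Ioo_sub_eq (a := y)
    (f := fun s => rpowLog a b (s + 1) - rpowLog a b s)
    (f' := fun s => rpowLogDeriv a b (s + 1) - rpowLogDeriv a b s)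
    (fun t ht => ((hasDerivAt_rpowLog (by linarith [ht.1])).comp_add_const t 1).sub
      (hasDerivAt_rpowLog (hy.trans_le ht.1)))
  obtain ⟨d, hd, h'⟩ := exists_mem_Ioo_sub_eq (f := rpowLogDeriv a b)
    (fun t ht => hasDerivAt_rpowLogDeriv (hy.trans (hc.1.trans_le ht.1)))
  calc rpowLog a b (y + 2) - 2 * rpowLog a b (y + 1) + rpowLog a b y
      = rpowLogDeriv2 a b d := by rw [← h', ← h]; ring_nf
    _ ≤ rpowLogDeriv2 a b y := rpowLogDeriv2_le ha hb hy (hc.1.trans hd.1).le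

end rpowLogDiff

lemma one_sub_mul_le_rpow {r a : ℝ} (hr0 : 0 < r) (hr1 : r ≤ 1) (ha : 0 ≤ a) :
    1 - (a + 1) * (1 - r) ≤ r ^ a :=
  calc 1 - (a + 1) * (1 - r) = 1 + (a + 1) * (r - 1) := by ring
    _ ≤ (1 + (r - 1)) ^ (a + 1) := one_add_mul_self_le_rpow_one_add (by linarith) (by linarith)
    _ = r ^ (a + 1) := by rw [add_sub_cancel]
    _ ≤ r ^ a := rpow_le_rpow_of_exponent_ge hr0 hr1 (by linarith)

lemma log_add_sub_log_le {y c : ℝ} (hy : 0 < y) (hc : 0 ≤ c) : log (y + c) - log y ≤ c / y := by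
  rw [← log_div (by linarith) hy.ne']
  calc log ((y + c) / y) ≤ (y + c) / y - 1 := log_le_sub_one_of_pos (by positivity)
    _ = c / y := by field_simp; ring

lemma one_sub_le_rpowLog_mul_rpowLog {a b y : ℝ} (ha : 0 ≤ a) (hb : 0 ≤ b)
    (hy : 2 * (a + 1) ≤ y) (hlog : 1 ≤ log y) :
    1 - (2 * (a + 1) + 2 * (b + 1)) / y ≤ rpowLog a b y * rpowLog (-a) (-b) (y + 2) := by
  have hy0 : 0 < y := by linarith
  have hL2 : log y ≤ log (y + 2) := log_le_log hy0 (by linarith)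
  have hr1 : 1 - 2 * (a + 1) / y ≤ (y / (y + 2)) ^ a := by
    refine le_trans ?_ (one_sub_mul_le_rpow (by positivity)
      (div_le_one_of_le₀ (by linarith) (by linarith)) ha)
    have : 1 - y / (y + 2) ≤ 2 / y := by
      rw [one_sub_div (by linarith), add_sub_cancel_left]
      exact div_le_div_of_nonneg_left zero_le_two hy0 (by linarith)
    nlinarith [show 2 * (a + 1) / y = (a + 1) * (2 / y) by ring]
  have hr2 : 1 - 2 * (b + 1) / y ≤ (log y / log (y + 2)) ^ b := by
    refine le_trans ?_ (one_sub_mul_le_rpow (div_pos (by linarith) (by linarith))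
      (div_le_one_of_le₀ hL2 (by linarith)) hb)
    have : 1 - log y / log (y + 2) ≤ 2 / y := by
      rw [one_sub_div (by linarith)]
      exact (div_le_self (by linarith) (by linarith)).trans (log_add_sub_log_le hy0 zero_le_two)
    nlinarith [show 2 * (b + 1) / y = (b + 1) * (2 / y) by ring]
  have hα : 0 ≤ 1 - 2 * (a + 1) / y := by
    rw [sub_nonneg, div_le_one hy0]; exact hy
  rw [rpowLog_neg (by linarith), rpowLog, ← div_eq_mul_inv, mul_div_mul_comm,
    ← div_rpow hy0.le (by linarith), ← div_rpow (by linarith) (by linarith)]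
  calc 1 - (2 * (a + 1) + 2 * (b + 1)) / y
      ≤ (1 - 2 * (a + 1) / y) * (1 - 2 * (b + 1) / y) := by
        have : 0 ≤ 2 * (a + 1) / y * (2 * (b + 1) / y) := by positivity
        rw [add_div]; nlinarith
    _ ≤ (1 - 2 * (a + 1) / y) * (log y / log (y + 2)) ^ b := mul_le_mul_of_nonneg_left hr2 hα
    _ ≤ (y / (y + 2)) ^ a * (log y / log (y + 2)) ^ b :=
        mul_le_mul_of_nonneg_right hr1 (rpow_nonneg (div_pos (by linarith) (by linarith)).le b)

lemma eventually_log_add_two_le {c : ℝ} (hc : 0 < c) :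
    ∀ᶠ y : ℝ in atTop, log (y + 2) ≤ c * y := by
  have hbound := (tendsto_atTop_add_const_right atTop 2 tendsto_id).eventually
    (isLittleO_log_id_atTop.bound (half_pos hc))
  filter_upwards [hbound, eventually_ge_atTop 2] with y h hy
  simp only [norm_eq_abs, id] at h
  rw [abs_of_pos (by linarith : (0:ℝ) < y + 2)] at h
  nlinarith [le_abs_self (log (y + 2))]

/-- Applied with `v = 1 / y`, `ℓ, ℓ₁, ℓ₂` the values of `1 / log` at `y, y + 1, y + 2`, and `ρ`
the ratio of the powers of `t` and `log t` at `y` and at `y + 2`. -/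
lemma remainder_ge_of_perturbation {p ε ρ v ℓ ℓ₁ ℓ₂ : ℝ} (hp : 0 < p) (hε : 0 < ε) (hv : 0 ≤ v)
    (hℓ₂ : 0 ≤ ℓ₂) (hℓ₂₁ : ℓ₂ ≤ ℓ₁) (hℓ₁ : ℓ₁ ≤ ℓ) (hℓ : ℓ ≤ 1) (hℓℓ₂ : ℓ - ℓ₂ ≤ 2 * v)
    (hρ : 1 - (6 * p + 6) * v ≤ ρ) (hℓ₂ε : 2 * ℓ₂ ≤ ε)
    (hsmall : 72 * (p + 1) * (3 * p + 1 + ε) * v ≤ ε * ℓ₂) :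
    ε * ℓ ≤ ρ * ((2 * p + 1 + (p + ε) * ℓ₁) * (2 + ℓ₂))
      - ((2 * p + 1 + p * ℓ) * (2 + ℓ) + ℓ ^ 2) := by
  set AB := (2 * p + 1 + (p + ε) * ℓ₁) * (2 + ℓ₂)
  have hAB_ge : (2 * p + 1 + (p + ε) * ℓ₂) * (2 + ℓ₂) ≤ AB :=
    mul_le_mul_of_nonneg_right
      (add_le_add_right (mul_le_mul_of_nonneg_left hℓ₂₁ (by linarith)) _) (by linarith)
  have hAB_le : AB ≤ 3 * (3 * p + 1 + ε) := by
    have : (p + ε) * ℓ₁ ≤ p + ε := mul_le_of_le_one_right (by linarith) (by linarith)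
    nlinarith
  have hρAB : AB - (6 * p + 6) * v * (3 * (3 * p + 1 + ε)) ≤ ρ * AB := by
    nlinarith [mul_le_mul_of_nonneg_left hAB_le (by positivity : 0 ≤ (6 * p + 6) * v),
      mul_nonneg (sub_nonneg.2 hρ) (hAB_ge.trans' (by positivity))]
  have hQ : (2 * p + 1 + p * ℓ) * (2 + ℓ) + ℓ ^ 2
      ≤ (2 * p + 1 + p * ℓ₂) * (2 + ℓ₂) + ℓ₂ ^ 2 + (12 * p + 6) * v := by
    nlinarith [mul_le_mul hℓℓ₂ (show 4 * p + 1 + (p + 1) * (ℓ + ℓ₂) ≤ 6 * p + 3 by nlinarith)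
      (by nlinarith) (by linarith)]
  -- with `ρ = 1` and `ℓ = ℓ₁ = ℓ₂` the remainder would be `2 ε ℓ + (ε - 1) ℓ ^ 2`
  nlinarith [mul_le_mul_of_nonneg_left hℓ₂ε hℓ₂, mul_nonneg hε.le (sq_nonneg ℓ₂),
    mul_le_mul_of_nonneg_left hℓℓ₂ hε.le,
    mul_nonneg hv (show 0 ≤ 18 * (p + 1) * (3 * p + 1 + ε) - (12 * p + 6 + 2 * ε) by nlinarith)]

section weightedDiff

variable {p ε y : ℝ}

lemma neg_weightedDiff_ge (hp : 0 < p) (hε : 0 < ε) (hy : 1 < y) :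
    p * rpowLog (-1) ε y * (rpowLog (2 * p + 1) p y * rpowLog (-(2 * p + 1)) (-p) (y + 2) *
        ((2 * p + 1 + (p + ε) * (log (y + 1))⁻¹) * (2 + (log (y + 2))⁻¹)) -
        ((2 * p + 1 + p * (log y)⁻¹) * (2 + (log y)⁻¹) + (log y)⁻¹ ^ 2)) ≤
      -weightedDiff (rpowLog (2 * p + 1) (p + ε)) (rpowLog (-(2 * p)) (-p)) y := by
  have hweight := rpowLog_add_one_sub_ge (a := 2 * p + 1) (b := p + ε) (by linarith)
    (by linarith) hy
  have hprofile := rpowLog_sub_rpowLog_add_one_ge (a := -(2 * p)) (b := -p) (by linarith)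
    (by linarith) (show 1 < y + 1 by linarith)
  rw [add_assoc, one_add_one_eq_two] at hprofile
  have hsecond := second_diff_rpowLog_le (a := -(2 * p)) (b := -p) (by linarith)
    (by linarith) hy
  have hX1 : rpowLog (2 * p + 1 - 1) (p + ε) y * (2 * p + 1 + (p + ε) / log (y + 1)) =
      rpowLog (-1) ε y * rpowLog (2 * p + 1) p y * (2 * p + 1 + (p + ε) * (log (y + 1))⁻¹) := by
    rw [rpowLog_mul_rpowLog hy]; ring_nf
  have hX2 : -rpowLogDeriv (-(2 * p)) (-p) (y + 2) =
      rpowLog (-(2 * p + 1)) (-p) (y + 2) * (p * (2 + (log (y + 2))⁻¹)) := by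
    rw [rpowLogDeriv]; ring_nf
  have hY : rpowLog (2 * p + 1) (p + ε) y * rpowLogDeriv2 (-(2 * p)) (-p) y = rpowLog (-1) ε y *
      (p * ((2 * p + 1 + p * (log y)⁻¹) * (2 + (log y)⁻¹) + (log y)⁻¹ ^ 2)) := by
    rw [rpowLogDeriv2, ← mul_assoc, rpowLog_mul_rpowLog hy]; ring_nf
  have hX1_nonneg : 0 ≤ rpowLog (2 * p + 1 - 1) (p + ε) y *
      (2 * p + 1 + (p + ε) / log (y + 1)) :=
    mul_nonneg (rpowLog_pos hy).le
      (add_nonneg (by linarith) (div_nonneg (by linarith) (log_nonneg (by linarith))))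
  calc _ = rpowLog (2 * p + 1 - 1) (p + ε) y * (2 * p + 1 + (p + ε) / log (y + 1)) *
          -rpowLogDeriv (-(2 * p)) (-p) (y + 2) -
          rpowLog (2 * p + 1) (p + ε) y * rpowLogDeriv2 (-(2 * p)) (-p) y := by
        rw [hX1, hX2, hY]; ring
    _ ≤ (rpowLog (2 * p + 1) (p + ε) (y + 1) - rpowLog (2 * p + 1) (p + ε) y) *
          (rpowLog (-(2 * p)) (-p) (y + 1) - rpowLog (-(2 * p)) (-p) (y + 2)) -
        rpowLog (2 * p + 1) (p + ε) y * (rpowLog (-(2 * p)) (-p) (y + 2) -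
          2 * rpowLog (-(2 * p)) (-p) (y + 1) + rpowLog (-(2 * p)) (-p) y) :=
        sub_le_sub (mul_le_mul hweight hprofile
            (neg_rpowLogDeriv_pos (by linarith) (by linarith) (by linarith)).le
            (hX1_nonneg.trans hweight))
          (mul_le_mul_of_nonneg_left hsecond (rpowLog_pos hy).le)
    _ = _ := by rw [weightedDiff]; ring

lemma neg_weightedDiff_ge_of_large (hp : 0 < p) (hε : 0 < ε) (hy : 4 * p + 4 ≤ y)
    (hlog : 1 ≤ log y) (hlogε : 2 ≤ ε * log y)
    (hsmall : 72 * (p + 1) * (3 * p + 1 + ε) * log (y + 2) ≤ ε * y) :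
    p * ε * rpowLog (-1) (ε - 1) y ≤
      -weightedDiff (rpowLog (2 * p + 1) (p + ε)) (rpowLog (-(2 * p)) (-p)) y := by
  have hy0 : 0 < y := by linarith
  have hy1 : 1 < y := by linarith
  have hL : 0 < log y := by linarith
  have hL1 : log y ≤ log (y + 1) := log_le_log hy0 (by linarith)
  have hL12 : log (y + 1) ≤ log (y + 2) := log_le_log (by linarith) (by linarith)
  have hL2 : 0 < log (y + 2) := by linarith
  have hρ := one_sub_le_rpowLog_mul_rpowLog (a := 2 * p + 1) (b := p) (by linarith)
    hp.le (by linarith) hlog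
  have hℓℓ₂ : (log y)⁻¹ - (log (y + 2))⁻¹ ≤ 2 * y⁻¹ := by
    rw [inv_sub_inv hL.ne' hL2.ne', ← div_eq_mul_inv]
    exact (div_le_self (by linarith) (one_le_mul_of_one_le_of_one_le hlog (by linarith))).trans
      (log_add_sub_log_le hy0 zero_le_two)
  have hℓε : 2 * (log y)⁻¹ ≤ ε := by
    rw [← div_eq_mul_inv, div_le_iff₀ hL]; linarith
  have hcore := remainder_ge_of_perturbation
    (ρ := rpowLog (2 * p + 1) p y * rpowLog (-(2 * p + 1)) (-p) (y + 2))
    (v := y⁻¹) (ℓ := (log y)⁻¹) (ℓ₁ := (log (y + 1))⁻¹) (ℓ₂ := (log (y + 2))⁻¹) hp hε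
    (by positivity) (inv_nonneg.2 hL2.le) (inv_anti₀ (by linarith) hL12)
    (inv_anti₀ hL hL1) (inv_le_one_of_one_le₀ hlog) hℓℓ₂ ((le_of_eq (by ring)).trans hρ)
    (by linarith [inv_anti₀ hL (hL1.trans hL12)])
    (by rw [← div_eq_mul_inv, ← div_eq_mul_inv, div_le_div_iff₀ hy0 hL2]; linarith)
  have hgain : rpowLog (-1) (ε - 1) y = rpowLog (-1) ε y * (log y)⁻¹ := by
    rw [← rpow_neg_one (log y), ← one_mul (log y ^ (-1 : ℝ)), ← rpow_zero y, ← rpowLog,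
      rpowLog_mul_rpowLog hy1]; ring_nf
  calc p * ε * rpowLog (-1) (ε - 1) y = p * rpowLog (-1) ε y * (ε * (log y)⁻¹) := by
        rw [hgain]; ring
    _ ≤ _ := mul_le_mul_of_nonneg_left hcore (mul_nonneg hp.le (rpowLog_pos hy1).le)
    _ ≤ _ := neg_weightedDiff_ge hp hε hy1

lemma weight_mul_profile_rpow_le (hp : 0 ≤ p) (hε : 0 ≤ ε) (hy : 1 < y)
    (hlog : ε - 1 ≤ log y) :
    (rpowLog (2 * p + 1) (p + ε) (y + 1) + rpowLog (2 * p + 1) (p + ε) y) *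
      rpowLog (-(2 * p) - 2) (-p - 1) (y + 1) ≤ 2 * rpowLog (-1) (ε - 1) y := by
  have hmono := rpowLog_le_rpowLog (a := 2 * p + 1) (b := p + ε) (by linarith) (by linarith) hy
    (le_add_of_nonneg_right zero_le_one)
  have hprod : rpowLog (2 * p + 1) (p + ε) (y + 1) * rpowLog (-(2 * p) - 2) (-p - 1) (y + 1) =
      rpowLog (-1) (ε - 1) (y + 1) := by
    rw [rpowLog_mul_rpowLog (by linarith)]; ring_nf
  have hanti := rpowLog_add_one_le (a := -1) (b := ε - 1) (by norm_num) (by linarith) hy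
  nlinarith [(rpowLog_pos (a := -(2 * p) - 2) (b := -p - 1) (show 1 < y + 1 by linarith)).le]

end weightedDiff

lemma weighted_average_sub_add_nonpos {F g : ℝ → ℝ} {y h δ m : ℝ} (hF₀ : 0 < F y)
    (hF₁ : 0 < F (y + 1)) (hδ : 0 ≤ δ) (hm : m * ((F (y + 1) + F y) * h) ≤ -weightedDiff F g y) :
    (F (y + 1) * (δ * g (y + 2)) + F y * (δ * g y)) / (F (y + 1) + F y) - δ * g (y + 1) +
      m * δ * h ≤ 0 := by
  have e : (F (y + 1) * (δ * g (y + 2)) + F y * (δ * g y)) / (F (y + 1) + F y) - δ * g (y + 1) +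
      m * δ * h = δ * (m * ((F (y + 1) + F y) * h) + weightedDiff F g y) / (F (y + 1) + F y) := by
    rw [weightedDiff]
    field_simp
    ring
  rw [e]
  exact div_nonpos_of_nonpos_of_nonneg (mul_nonpos_of_nonneg_of_nonpos hδ (by linarith))
    (by linarith)

lemma mul_rpowLog_rpow {p σ m t : ℝ} (hpσ : p * σ = p + 1) (hm : 0 < m) (ht : 1 < t) :
    (m ^ p * rpowLog (-(2 * p)) (-p) t) ^ σ = m * m ^ p * rpowLog (-(2 * p) - 2) (-p - 1) t := by
  rw [mul_rpow (rpow_nonneg hm.le p) (rpowLog_pos ht).le, ← rpow_mul hm.le, hpσ,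
    rpow_add_one hm.ne', rpowLog_rpow ht,
    show -(2 * p) * σ = -(2 * p) - 2 by linear_combination -2 * hpσ,
    show -p * σ = -p - 1 by linear_combination -hpσ]
  ring

section supersolution

variable {p ε σ : ℝ}

lemma first_step_nonpos {m t : ℝ} (hpσ : p * σ = p + 1) (hm : 0 < m) (ht : 1 < t)
    (hmt : m * rpowLog (-(2 * p) - 2) (-p - 1) t ≤
      rpowLog (-(2 * p)) (-p) t - rpowLog (-(2 * p)) (-p) (t + 1)) :
    m ^ p * rpowLog (-(2 * p)) (-p) (t + 1) - m ^ p * rpowLog (-(2 * p)) (-p) t +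
      (m ^ p * rpowLog (-(2 * p)) (-p) t) ^ σ ≤ 0 := by
  rw [mul_rpowLog_rpow hpσ hm ht]
  nlinarith [mul_le_mul_of_nonneg_left hmt (rpow_pos_of_pos hm p).le]

lemma eventually_interior_step_nonpos (hp : 0 < p) (hε : 0 < ε) (hpσ : p * σ = p + 1) :
    ∀ᶠ y in atTop, ∀ m, 0 < m → m ≤ p * ε / 2 →
      (rpowLog (2 * p + 1) (p + ε) (y + 1) * (m ^ p * rpowLog (-(2 * p)) (-p) (y + 2)) +
          rpowLog (2 * p + 1) (p + ε) y * (m ^ p * rpowLog (-(2 * p)) (-p) y)) /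
        (rpowLog (2 * p + 1) (p + ε) (y + 1) + rpowLog (2 * p + 1) (p + ε) y) -
        m ^ p * rpowLog (-(2 * p)) (-p) (y + 1) +
        (m ^ p * rpowLog (-(2 * p)) (-p) (y + 1)) ^ σ ≤ 0 := by
  have hK : 0 < 72 * (p + 1) * (3 * p + 1 + ε) := by positivity
  filter_upwards [eventually_ge_atTop (4 * p + 4),
    tendsto_log_atTop.eventually_ge_atTop (1 + ε + 2 / ε),
    eventually_log_add_two_le (div_pos hε hK)] with y hy hlog hsmall m hm hmε
  have hy1 : 1 < y := by linarith
  have h2ε : 0 < 2 / ε := div_pos two_pos hε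
  have hgain := neg_weightedDiff_ge_of_large hp hε hy (by linarith)
    ((div_le_iff₀' hε).1 (by linarith)) (calc
      _ ≤ 72 * (p + 1) * (3 * p + 1 + ε) * (ε / (72 * (p + 1) * (3 * p + 1 + ε)) * y) :=
        mul_le_mul_of_nonneg_left hsmall hK.le
      _ = ε * y := by field_simp)
  have hweight := weight_mul_profile_rpow_le hp.le hε.le hy1 (by linarith)
  have hW : 0 ≤ (rpowLog (2 * p + 1) (p + ε) (y + 1) + rpowLog (2 * p + 1) (p + ε) y) *
      rpowLog (-(2 * p) - 2) (-p - 1) (y + 1) := by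
    have := rpowLog_pos (a := -(2 * p) - 2) (b := -p - 1) (show 1 < y + 1 by linarith)
    have := rpowLog_pos (a := 2 * p + 1) (b := p + ε) hy1
    have := rpowLog_pos (a := 2 * p + 1) (b := p + ε) (show 1 < y + 1 by linarith)
    positivity
  rw [mul_rpowLog_rpow hpσ hm (by linarith)]
  refine weighted_average_sub_add_nonpos (rpowLog_pos hy1) (rpowLog_pos (by linarith))
    (rpow_pos_of_pos hm p).le ?_
  nlinarith [mul_le_mul_of_nonneg_right hmε hW, mul_le_mul_of_nonneg_left hweight
    (by positivity : 0 ≤ p * ε / 2)]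

end supersolution

/-- existence of n0 ≥ 2 and δ > 0 making the radial inequalities
(eqs. (26)-(27) of the paper) hold, where p = 1/(σ-1),
w_n = (n+n0)^{2p+1} (ln(n+n0))^{p+ε} and u_n = δ/((n+n0)^{2p} (ln(n+n0))^p). -/
theorem stmt_12 (σ ε : ℝ) (hσ : 1 < σ) (hε : 0 < ε) :
    ∃ (n0 : ℕ) (δ : ℝ), 2 ≤ n0 ∧ 0 < δ ∧
      ∀ w u : ℕ → ℝ,
        (∀ n : ℕ, w n = ((n : ℝ) + n0) ^ (2 * (1 / (σ - 1)) + 1) *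
            Real.log ((n : ℝ) + n0) ^ (1 / (σ - 1) + ε)) →
        (∀ n : ℕ, u n = δ / (((n : ℝ) + n0) ^ (2 * (1 / (σ - 1))) *
            Real.log ((n : ℝ) + n0) ^ (1 / (σ - 1)))) →
        (u 1 - u 0 + u 0 ^ σ ≤ 0 ∧
          ∀ n : ℕ, 1 ≤ n →
            (w n * u (n + 1) + w (n - 1) * u (n - 1)) / (w n + w (n - 1))
              - u n + u n ^ σ ≤ 0) := by
  set p := 1 / (σ - 1) with hp_def
  have hp : 0 < p := one_div_pos.2 (sub_pos.2 hσ)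
  have hpσ : p * σ = p + 1 := by
    rw [hp_def]; field_simp [(sub_pos.2 hσ).ne']; ring
  obtain ⟨M, hM⟩ := eventually_atTop.1 (eventually_interior_step_nonpos hp hε hpσ)
  obtain ⟨n0, hn0⟩ := exists_nat_ge (max M 2)
  have hn0_two : (2 : ℝ) ≤ n0 := le_of_max_le_right hn0
  set m := min (p * ε / 2) ((rpowLog (-(2 * p)) (-p) n0 - rpowLog (-(2 * p)) (-p) (n0 + 1)) /
    rpowLog (-(2 * p) - 2) (-p - 1) n0)
  have hm : 0 < m := lt_min (by positivity) (div_pos (sub_pos.2 (rpowLog_add_one_lt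
    (by linarith) (by linarith) (by linarith))) (rpowLog_pos (by linarith)))
  refine ⟨n0, m ^ p, by exact_mod_cast hn0_two, rpow_pos_of_pos hm p, fun w u hw hu => ?_⟩
  have hw' : ∀ (n : ℕ) (t : ℝ), (n : ℝ) + n0 = t → w n = rpowLog (2 * p + 1) (p + ε) t := by
    rintro n t rfl; exact hw n
  have hu' : ∀ (n : ℕ) (t : ℝ), (n : ℝ) + n0 = t → u n = m ^ p * rpowLog (-(2 * p)) (-p) t := by
    rintro n t rfl
    rw [hu n, rpowLog_neg (by linarith [n.cast_nonneg (α := ℝ)]), div_eq_mul_inv]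
  refine ⟨?_, ?_⟩
  · rw [hu' 1 (n0 + 1) (by push_cast; ring), hu' 0 n0 (by simp)]
    exact first_step_nonpos hpσ hm (by linarith)
      ((le_div_iff₀ (rpowLog_pos (by linarith))).1 (min_le_right _ _))
  · rintro (_ | k) hk
    · omega
    rw [Nat.add_sub_cancel, hw' (k + 1) (k + n0 + 1) (by push_cast; ring), hw' k _ rfl,
      hu' (k + 1 + 1) (k + n0 + 2) (by push_cast; ring), hu' k _ rfl,
      hu' (k + 1) (k + n0 + 1) (by push_cast; ring)]
    exact hM _ (by linarith [le_of_max_le_left hn0, k.cast_nonneg (α := ℝ)]) m hm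
      (min_le_left _ _)
end
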